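/- arXiv:2309.05657 — 4 statements merged into one kernel-verified Lean document; each statement's English description precedes it below -/
import Mathlib

section
/- For all ε with 0 < ε < e^{−2}, the inverse of the standard Gaussian cumulative distribution function satisfies Φ^{−1}(ε/2) − Φ^{−1}(ε/4) ≥ √(2π)/(4·log(1/ε)). -/
open MeasureTheory Real Set Filter Topology

noncomputable section

/-- The standard Gaussian cumulative distribution function
`Φ(z) = ∫_{-∞}^z (2π)^{-1/2} e^{-t²/2} dt`. -/
def gaussCdf (z : ℝ) : ℝ :=
  ∫ t in Set.Iic z, (Real.sqrt (2 * Real.pi))⁻¹ * Real.exp (-t ^ 2 / 2)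

namespace GaussProofAux

noncomputable def φg (t : ℝ) : ℝ := (Real.sqrt (2 * Real.pi))⁻¹ * Real.exp (-t ^ 2 / 2)

lemma gaussCdf_eq (z : ℝ) : gaussCdf z = ∫ t in Set.Iic z, φg t := rfl

lemma φg_pos (t : ℝ) : 0 < φg t := by
  unfold φg
  have : 0 < Real.sqrt (2 * Real.pi) := Real.sqrt_pos.2 (by positivity)
  positivity

lemma φg_cont : Continuous φg := by
  unfold φg; fun_prop

lemma φg_integrable : Integrable φg := by
  have h : Integrable (fun t : ℝ => Real.exp (-(1/2) * t ^ 2)) :=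
    integrable_exp_neg_mul_sq (by norm_num)
  have h2 := h.const_mul (Real.sqrt (2 * Real.pi))⁻¹
  apply h2.congr
  filter_upwards with t
  unfold φg
  congr 1
  ring

lemma gaussCdf_mono : Monotone gaussCdf := by
  intro r s h
  rw [gaussCdf_eq, gaussCdf_eq]
  exact setIntegral_mono_set φg_integrable.integrableOn
    (Eventually.of_forall fun t => (φg_pos t).le)
    (HasSubset.Subset.eventuallyLE (Iic_subset_Iic.2 h))

lemma gaussCdf_sub {b a : ℝ} (h : b ≤ a) :
    gaussCdf a - gaussCdf b = ∫ t in Ioc b a, φg t := by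
  have hu : Iic b ∪ Ioc b a = Iic a := Iic_union_Ioc_eq_Iic h
  have hd : Disjoint (Iic b) (Ioc b a) := Iic_disjoint_Ioc le_rfl
  have hi := setIntegral_union hd measurableSet_Ioc
    (φg_integrable.integrableOn (s := Iic b)) (φg_integrable.integrableOn (s := Ioc b a))
  rw [gaussCdf_eq, gaussCdf_eq, ← hu, hi]
  ring

lemma φg_hasDeriv (t : ℝ) : HasDerivAt φg (-t * φg t) t := by
  have h3 : HasDerivAt (fun t : ℝ => -t ^ 2 / 2) (-t) t := by
    have h := ((hasDerivAt_pow 2 t).neg).div_const 2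
    refine h.congr_deriv ?_
    ring
  have h4 := h3.exp
  have h5 := h4.const_mul (Real.sqrt (2 * Real.pi))⁻¹
  refine h5.congr_deriv ?_
  unfold φg; ring

lemma sqrtS_hasDeriv (t c : ℝ) (hc : 0 < c) :
    HasDerivAt (fun t : ℝ => Real.sqrt (t ^ 2 + c)) (t / Real.sqrt (t ^ 2 + c)) t := by
  have h1 : HasDerivAt (fun t : ℝ => t ^ 2 + c) (2 * t) t := by
    simpa using (hasDerivAt_pow 2 t).add_const c
  have hne : t ^ 2 + c ≠ 0 := by positivity
  have h2 := (Real.hasDerivAt_sqrt hne).comp t h1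
  refine h2.congr_deriv ?_
  field_simp

lemma tendsto_φg : Tendsto φg atBot (𝓝 0) := by
  have h0 : Tendsto (fun t : ℝ => t ^ 2) atBot atTop := by
    have h := (tendsto_pow_atTop (n := 2) (by norm_num)).comp
      (tendsto_neg_atBot_atTop : Tendsto (fun t : ℝ => -t) atBot atTop)
    have heq : ((fun x : ℝ => x ^ 2) ∘ fun t : ℝ => -t) = fun t : ℝ => t ^ 2 := by
      funext u; simp [Function.comp, neg_pow]
    rwa [heq] at h
  have h1 : Tendsto (fun t : ℝ => -t ^ 2 / 2) atBot atBot := by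
    apply Tendsto.atBot_div_const (by norm_num : (0:ℝ) < 2)
    exact tendsto_neg_atTop_atBot.comp h0
  have h2 := Real.tendsto_exp_atBot.comp h1
  have h3 := h2.const_mul (Real.sqrt (2 * Real.pi))⁻¹
  rw [mul_zero] at h3
  exact h3.congr fun t => rfl

set_option maxHeartbeats 1000000 in
lemma millsLow {a : ℝ} (ha : a ≤ -(1/2)) :
    φg a * (π / (Real.sqrt (a ^ 2 + 2 * π) - (π - 1) * a)) ≤ gaussCdf a := by
  have hpi := Real.pi_gt_d6
  have hpi' := Real.pi_lt_d6
  set S : ℝ → ℝ := fun t => Real.sqrt (t ^ 2 + 2 * π) with hSdef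
  set D : ℝ → ℝ := fun t => S t - (π - 1) * t with hDdef
  have hSpos : ∀ t, 0 < S t := fun t => Real.sqrt_pos.2 (by positivity)
  have hSsq : ∀ t, (S t) ^ 2 = t ^ 2 + 2 * π := fun t => Real.sq_sqrt (by positivity)
  have hScont : Continuous S := by
    exact Real.continuous_sqrt.comp ((continuous_pow 2).add continuous_const)
  have hDpos : ∀ t, t ≤ a → 0 < D t := by
    intro t ht
    have h1 : 0 < S t := hSpos t
    have h2 : t < 0 := lt_of_le_of_lt (ht.trans ha) (by norm_num)
    have : 0 < -(π - 1) * t := by nlinarith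
    simp only [hDdef]; nlinarith
  set F : ℝ → ℝ := fun t => φg t * (π / D t) with hFdef
  set F' : ℝ → ℝ := fun t => φg t * (π * ((-t) * D t - (t / S t - (π - 1))) / (D t) ^ 2)
    with hF'def
  have hderivF : ∀ t ∈ Iic a, HasDerivAt F (F' t) t := by
    intro t ht
    have hDne : D t ≠ 0 := (hDpos t ht).ne'
    have hS := sqrtS_hasDeriv t (2 * π) (by positivity)
    have hD : HasDerivAt D (t / S t - (π - 1)) t := by
      have h2 : HasDerivAt (fun u : ℝ => (π - 1) * u) (π - 1) t := by
        simpa using (hasDerivAt_id t).const_mul (π - 1)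
      exact hS.sub h2
    have hq : HasDerivAt (fun u => π / D u) ((0 * D t - π * (t / S t - (π - 1))) / (D t) ^ 2) t :=
      (hasDerivAt_const t π).div hD hDne
    have := (φg_hasDeriv t).mul hq
    refine this.congr_deriv ?_
    simp only [hF'def]
    field_simp
    ring
  have hkeyineq : ∀ t, t ≤ a → π * ((-t) * D t - (t / S t - (π - 1))) ≤ (D t) ^ 2 := by
    intro t ht
    set s : ℝ := -t with hs
    have hs2 : (1:ℝ)/2 ≤ s := by simp only [hs]; linarith
    set St : ℝ := S t with hSt
    have hStpos : 0 < St := hSpos t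
    have hStsq : St ^ 2 = s ^ 2 + 2 * π := by
      rw [hSt, hSsq t]; simp [hs]
    have hDt : D t = St + (π - 1) * s := by simp only [hDdef, hSt, hs]; ring
    have hSt52 : St ≤ 5.2 * s := by
      nlinarith [hStsq, hStpos, hs2]
    have key1 : 0 ≤ s - (π - 3) * St := by nlinarith [hSt52, hs2]
    have key2 : s < St := by nlinarith [hStsq, hStpos]
    have e2 : (St - s) * (St + s) = 2 * π := by nlinarith [hStsq]
    have e3 : ((π - 1) * St + s) * (St + s) ≤ 2 * (D t * St) := by
      have hid : 2 * (D t * St) - ((π - 1) * St + s) * (St + s)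
          = (St - s) * (s - (π - 3) * St) := by rw [hDt]; ring
      nlinarith [mul_nonneg (le_of_lt (sub_pos.2 key2)) key1]
    have e4 : ((π - 1) * St + s) * (St + s) * (St - s) ≤ 2 * (D t * St) * (St - s) :=
      mul_le_mul_of_nonneg_right e3 (le_of_lt (sub_pos.2 key2))
    have e5 : ((π - 1) * St + s) * (St + s) * (St - s) = 2 * π * ((π - 1) * St + s) := by
      linear_combination ((π - 1) * St + s) * e2
    have e6 : π * ((π - 1) * St + s) ≤ D t * St * (St - s) := by linarith
    have hgoalSt : π * (s * D t * St + s + (π - 1) * St) ≤ (D t) ^ 2 * St := by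
      have e1 : (D t) ^ 2 * St - π * s * (D t * St) = D t * St * (St - s) := by
        rw [hDt]; ring
      nlinarith [e6, e1]
    have hform : π * ((-t) * D t - (t / S t - (π - 1)))
        = π * (s * D t + s / St + (π - 1)) := by
      rw [← hSt, ← hs]; ring
    have h9 : π * (s * D t + s / St + (π - 1))
        = π * (s * D t * St + s + (π - 1) * St) / St := by
      field_simp
      try ring
    rw [hform, h9, div_le_iff₀ hStpos]
    calc π * (s * D t * St + s + (π - 1) * St) ≤ (D t) ^ 2 * St := hgoalSt
      _ = D t ^ 2 * St := by ring
  have hF'le : ∀ t ∈ Iic a, F' t ≤ φg t := by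
    intro t ht
    have h1 := hkeyineq t ht
    have hD2 : (0:ℝ) < (D t) ^ 2 := pow_pos (hDpos t ht) 2
    have h2 : π * ((-t) * D t - (t / S t - (π - 1))) / (D t) ^ 2 ≤ 1 := by
      rw [div_le_one hD2]; exact h1
    simp only [hF'def]
    calc φg t * (π * ((-t) * D t - (t / S t - (π - 1))) / (D t) ^ 2) ≤ φg t * 1 :=
          mul_le_mul_of_nonneg_left h2 (φg_pos t).le
      _ = φg t := mul_one _
  have hF'nonneg : ∀ t ∈ Iic a, 0 ≤ F' t := by
    intro t ht
    have h2 : t < 0 := lt_of_le_of_lt ((mem_Iic.1 ht).trans ha) (by norm_num)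
    have h3 : t / S t ≤ 0 := div_nonpos_iff.2 (Or.inr ⟨h2.le, (hSpos t).le⟩)
    have h4 : 0 ≤ (-t) * D t - (t / S t - (π - 1)) := by
      have h5 : 0 ≤ (-t) * D t := mul_nonneg (by linarith) (hDpos t ht).le
      have h6 : 0 ≤ -(t / S t) := neg_nonneg.2 h3
      clear_value F' F D S
      nlinarith [h5, h6, hpi]
    simp only [hF'def]
    apply mul_nonneg (φg_pos t).le
    apply div_nonneg (mul_nonneg Real.pi_pos.le h4) (sq_nonneg _)
  have hcontF' : ContinuousOn F' (Iic a) := by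
    simp only [hF'def]
    apply (φg_cont.continuousOn).mul
    apply ContinuousOn.div
    · apply ContinuousOn.mul continuousOn_const
      apply ContinuousOn.sub
      · exact (continuousOn_id.neg).mul (hScont.continuousOn.sub (by fun_prop))
      · exact ((continuousOn_id.div hScont.continuousOn
          (fun t _ => (hSpos t).ne')).sub continuousOn_const)
    · exact (hScont.continuousOn.sub (by fun_prop)).pow 2
    · exact fun t ht => pow_ne_zero 2 (hDpos t ht).ne'
  have hintF' : IntegrableOn F' (Iic a) := by
    apply Integrable.mono (φg_integrable.integrableOn)
      (hcontF'.aestronglyMeasurable measurableSet_Iic)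
    filter_upwards [ae_restrict_mem measurableSet_Iic] with t ht
    rw [Real.norm_eq_abs, Real.norm_eq_abs, abs_of_nonneg (hF'nonneg t ht),
      abs_of_nonneg (φg_pos t).le]
    exact hF'le t ht
  have htendF : Tendsto F atBot (𝓝 0) := by
    apply squeeze_zero' (g := fun t => 2 * φg t)
    · filter_upwards [eventually_le_atBot a] with t ht
      have h2 : t < 0 := lt_of_le_of_lt (ht.trans ha) (by norm_num)
      simp only [hFdef]
      exact mul_nonneg (φg_pos t).le (div_nonneg Real.pi_pos.le (hDpos t ht).le)
    · filter_upwards [eventually_le_atBot a] with t ht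
      have h2 : t ≤ 0 := le_of_lt (lt_of_le_of_lt (ht.trans ha) (by norm_num))
      have hs2pi : Real.sqrt (2*π) ^ 2 = 2*π := Real.sq_sqrt (by positivity)
      have hs2pipos : 0 < Real.sqrt (2*π) := Real.sqrt_pos.2 (by positivity)
      have hDge : Real.sqrt (2*π) ≤ D t := by
        have h5 : S t ^ 2 = t^2 + 2*π := hSsq t
        have h6 : Real.sqrt (2*π) ≤ S t := by nlinarith [hSpos t]
        have h7 : 0 ≤ -(π - 1) * t := by nlinarith
        simp only [hDdef]; nlinarith
      have hπD : π / D t ≤ 2 := by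
        rw [div_le_iff₀ (hDpos t ht)]
        nlinarith
      simp only [hFdef]
      calc φg t * (π / D t) ≤ φg t * 2 := mul_le_mul_of_nonneg_left hπD (φg_pos t).le
        _ = 2 * φg t := by ring
    · simpa using tendsto_φg.const_mul 2
  have hFTC := integral_Iic_of_hasDerivAt_of_tendsto' hderivF hintF' htendF
  rw [sub_zero] at hFTC
  calc φg a * (π / (Real.sqrt (a ^ 2 + 2 * π) - (π - 1) * a)) = F a := by
        simp only [hFdef]
        rfl
    _ = ∫ t in Iic a, F' t := hFTC.symm
    _ ≤ ∫ t in Iic a, φg t :=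
        setIntegral_mono_on hintF' φg_integrable.integrableOn measurableSet_Iic hF'le
    _ = gaussCdf a := (gaussCdf_eq a).symm

lemma alg1 (s Tt Et : ℝ) (hs1 : 1 ≤ s) (hTtpos : 0 < Tt)
    (hTtsq : Tt ^ 2 = s ^ 2 + 8 / π) (hEt : Et = Tt + s) :
    Et ^ 2 * Tt ≤ 2 * (s * Et * Tt + s + Tt) := by
  have hpi := Real.pi_gt_d6
  have hpi' := Real.pi_lt_d6
  have hk : (0:ℝ) < 8 / π := by positivity
  have hku : 8 / π < 2.5465 := by
    rw [div_lt_iff₀ Real.pi_pos]; nlinarith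
  have hT189 : Tt ≤ 1.89 * s := by nlinarith [hTtsq, hTtpos, hs1, hku]
  have hkT : (8 / π) * Tt ≤ 2 * s + 2 * Tt := by nlinarith [hT189, hku, hTtpos, hs1, hk]
  have eid : Et ^ 2 * Tt - 2 * s * (Et * Tt) = (8 / π) * Tt := by
    rw [hEt]; linear_combination Tt * hTtsq
  nlinarith [hkT, eid]

lemma alg2 (s Tt Et : ℝ) (hs1 : 1 ≤ s) (hTtpos : 0 < Tt)
    (hTtsq : Tt ^ 2 = s ^ 2 + 8 / π) (hEt : Et = Tt + s) :
    2 * (s * Et + s / Tt + 1) ≤ 3 * Et ^ 2 := by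
  have hk : (0:ℝ) < 8 / π := by positivity
  have hsT : s ≤ Tt := by nlinarith [hk]
  have hsoverT : s / Tt ≤ 1 := by rw [div_le_one hTtpos]; exact hsT
  have hE2s : 2 * s ≤ Et := by rw [hEt]; linarith
  have hEge2 : (2:ℝ) ≤ Et := by linarith
  nlinarith [mul_le_mul_of_nonneg_right hE2s (by linarith : (0:ℝ) ≤ Et),
    mul_le_mul hEge2 hEge2 (by norm_num) (by linarith)]

set_option maxHeartbeats 1000000 in
/-- Sharp upper Mills-type bound on the left tail:
for `a ≤ -1`, `Φ(a) ≤ φ(a) · 2/(√(a²+8/π) - a)`. -/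
lemma millsUp {a : ℝ} (ha : a ≤ -1) :
    gaussCdf a ≤ φg a * (2 / (Real.sqrt (a ^ 2 + 8 / π) - a)) := by
  have hpi := Real.pi_gt_d6
  have hpi' := Real.pi_lt_d6
  have hk : (0:ℝ) < 8 / π := by positivity
  have hkl : 2.25 < 8 / π := by
    rw [lt_div_iff₀ Real.pi_pos]; nlinarith
  set T : ℝ → ℝ := fun t => Real.sqrt (t ^ 2 + 8 / π) with hTdef
  set E : ℝ → ℝ := fun t => T t - t with hEdef
  have hTpos : ∀ t, 0 < T t := fun t => Real.sqrt_pos.2 (by positivity)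
  have hTsq : ∀ t, (T t) ^ 2 = t ^ 2 + 8 / π := fun t => Real.sq_sqrt (by positivity)
  have hTcont : Continuous T :=
    Real.continuous_sqrt.comp ((continuous_pow 2).add continuous_const)
  have hEpos : ∀ t, 0 < E t := by
    intro t
    have h1 := hTsq t
    have h2 := (hTpos t).le
    have h3 : E t = T t - t := by simp only [hEdef]
    rw [h3]
    clear_value T E
    nlinarith [hk]
  set G : ℝ → ℝ := fun t => φg t * (2 / E t) with hGdef
  set G' : ℝ → ℝ := fun t => φg t * (2 * ((-t) * E t - (t / T t - 1)) / (E t) ^ 2) with hG'def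
  have hderivG : ∀ t ∈ Iic a, HasDerivAt G (G' t) t := by
    intro t _
    have hEne : E t ≠ 0 := (hEpos t).ne'
    have hT := sqrtS_hasDeriv t (8 / π) hk
    have hE : HasDerivAt E (t / T t - 1) t := hT.sub (hasDerivAt_id t)
    have hq : HasDerivAt (fun u => 2 / E u) ((0 * E t - 2 * (t / T t - 1)) / (E t) ^ 2) t :=
      (hasDerivAt_const t 2).div hE hEne
    have := (φg_hasDeriv t).mul hq
    refine this.congr_deriv ?_
    simp only [hG'def]
    field_simp
    ring
  have hkeyineq : ∀ t, t ≤ a → (E t) ^ 2 ≤ 2 * ((-t) * E t - (t / T t - 1)) := by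
    intro t ht
    have hs1 : (1:ℝ) ≤ -t := by linarith
    have hTtpos : 0 < T t := hTpos t
    have hTtsq : (T t) ^ 2 = (-t) ^ 2 + 8 / π := by rw [hTsq t]; ring
    have hEt : E t = T t + (-t) := by simp only [hEdef]; ring
    have hmain := alg1 (-t) (T t) (E t) hs1 hTtpos hTtsq hEt
    have hform : 2 * ((-t) * E t - (t / T t - 1)) = 2 * ((-t) * E t + (-t) / T t + 1) := by
      ring
    rw [hform]
    have h9 : 2 * ((-t) * E t + (-t) / T t + 1)
        = 2 * ((-t) * E t * T t + (-t) + T t) / T t := by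
      field_simp
    rw [h9, le_div_iff₀ hTtpos]
    clear_value T E
    nlinarith [hmain]
  have hG'ge : ∀ t ∈ Iic a, φg t ≤ G' t := by
    intro t ht
    have h1 := hkeyineq t ht
    have hE2 : (0:ℝ) < (E t) ^ 2 := pow_pos (hEpos t) 2
    have h2 : (1:ℝ) ≤ 2 * ((-t) * E t - (t / T t - 1)) / (E t) ^ 2 := by
      rw [le_div_iff₀ hE2]
      clear_value T E
      nlinarith [h1]
    simp only [hG'def]
    calc φg t = φg t * 1 := (mul_one _).symm
      _ ≤ φg t * (2 * ((-t) * E t - (t / T t - 1)) / (E t) ^ 2) :=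
          mul_le_mul_of_nonneg_left h2 (φg_pos t).le
  have hG'le : ∀ t ∈ Iic a, G' t ≤ 3 * φg t := by
    intro t ht
    have h2 : t ≤ -1 := le_trans ht ha
    have hE2 : (0:ℝ) < (E t) ^ 2 := pow_pos (hEpos t) 2
    have hbound : 2 * ((-t) * E t - (t / T t - 1)) ≤ 3 * (E t) ^ 2 := by
      have hs1 : (1:ℝ) ≤ -t := by linarith
      have hTtpos : 0 < T t := hTpos t
      have hTtsq : (T t) ^ 2 = (-t) ^ 2 + 8 / π := by rw [hTsq t]; ring
      have hEt : E t = T t + (-t) := by simp only [hEdef]; ring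
      have hmain := alg2 (-t) (T t) (E t) hs1 hTtpos hTtsq hEt
      have hform : 2 * ((-t) * E t - (t / T t - 1)) = 2 * ((-t) * E t + (-t) / T t + 1) := by
        ring
      rw [hform]
      clear_value T E
      nlinarith [hmain]
    have h3 : 2 * ((-t) * E t - (t / T t - 1)) / (E t) ^ 2 ≤ 3 := by
      rw [div_le_iff₀ hE2]
      clear_value T E
      nlinarith [hbound]
    simp only [hG'def]
    calc φg t * (2 * ((-t) * E t - (t / T t - 1)) / (E t) ^ 2) ≤ φg t * 3 :=
          mul_le_mul_of_nonneg_left h3 (φg_pos t).le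
      _ = 3 * φg t := by ring
  have hG'nonneg : ∀ t ∈ Iic a, 0 ≤ G' t := fun t ht => le_trans (φg_pos t).le (hG'ge t ht)
  have hcontG' : ContinuousOn G' (Iic a) := by
    simp only [hG'def]
    apply (φg_cont.continuousOn).mul
    apply ContinuousOn.div
    · apply ContinuousOn.mul continuousOn_const
      apply ContinuousOn.sub
      · exact (continuousOn_id.neg).mul (hTcont.continuousOn.sub continuousOn_id)
      · exact ((continuousOn_id.div hTcont.continuousOn
          (fun t _ => (hTpos t).ne')).sub continuousOn_const)
    · exact (hTcont.continuousOn.sub continuousOn_id).pow 2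
    · exact fun t _ => pow_ne_zero 2 (hEpos t).ne'
  have hintG' : IntegrableOn G' (Iic a) := by
    apply Integrable.mono ((φg_integrable.const_mul 3).integrableOn)
      (hcontG'.aestronglyMeasurable measurableSet_Iic)
    filter_upwards [ae_restrict_mem measurableSet_Iic] with t ht
    rw [Real.norm_eq_abs, Real.norm_eq_abs, abs_of_nonneg (hG'nonneg t ht),
      abs_of_nonneg (by nlinarith [φg_pos t] : (0:ℝ) ≤ 3 * φg t)]
    exact hG'le t ht
  have htendG : Tendsto G atBot (𝓝 0) := by
    apply squeeze_zero' (g := fun t => 2 * φg t)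
    · filter_upwards [eventually_le_atBot a] with t ht
      simp only [hGdef]
      exact mul_nonneg (φg_pos t).le (div_nonneg (by norm_num) (hEpos t).le)
    · filter_upwards [eventually_le_atBot (0:ℝ)] with t ht
      have h1 : (1.5:ℝ) ≤ T t := by
        nlinarith [hTsq t, (hTpos t).le, hkl, sq_nonneg t]
      have hEt : E t = T t - t := by simp only [hEdef]
      have h2 : 2 / E t ≤ 2 := by
        rw [div_le_iff₀ (hEpos t), hEt]
        clear_value T E
        nlinarith [h1]
      simp only [hGdef]
      calc φg t * (2 / E t) ≤ φg t * 2 := mul_le_mul_of_nonneg_left h2 (φg_pos t).le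
        _ = 2 * φg t := by ring
    · simpa using tendsto_φg.const_mul 2
  have hFTC := integral_Iic_of_hasDerivAt_of_tendsto' hderivG hintG' htendG
  rw [sub_zero] at hFTC
  calc gaussCdf a = ∫ t in Iic a, φg t := gaussCdf_eq a
    _ ≤ ∫ t in Iic a, G' t :=
        setIntegral_mono_on φg_integrable.integrableOn hintG' measurableSet_Iic hG'ge
    _ = G a := hFTC
    _ = φg a * (2 / (Real.sqrt (a ^ 2 + 8 / π) - a)) := by simp only [hGdef]; rfl

lemma sqrt2pi_lt : Real.sqrt (2 * π) < 2.5066285 := by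
  have h : (2 * π) < 2.5066285 ^ 2 := by nlinarith [Real.pi_lt_d6]
  calc Real.sqrt (2 * π) < Real.sqrt (2.5066285 ^ 2) :=
        Real.sqrt_lt_sqrt (by positivity) h
    _ = 2.5066285 := Real.sqrt_sq (by norm_num)

lemma sqrt2pi_gt : 2.506628 < Real.sqrt (2 * π) := by
  have h : (2.506628 : ℝ) ^ 2 < 2 * π := by nlinarith [Real.pi_gt_d6]
  calc (2.506628 : ℝ) = Real.sqrt (2.506628 ^ 2) := (Real.sqrt_sq (by norm_num)).symm
    _ < Real.sqrt (2 * π) := Real.sqrt_lt_sqrt (by positivity) h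

lemma exp084 : Real.exp 0.84 < 2.316383 := by
  have h := Real.exp_bound (x := (0.84:ℝ))
    (by rw [abs_of_nonneg (by norm_num : (0:ℝ) ≤ 0.84)]; norm_num) (n := 6) (by norm_num)
  rw [abs_of_nonneg (by norm_num : (0:ℝ) ≤ 0.84)] at h
  have h2 := (abs_sub_le_iff.1 h).1
  have h3 : ∑ m ∈ Finset.range 6, (0.84:ℝ) ^ m / m.factorial
      = 1 + 0.84 + 0.84^2/2 + 0.84^3/6 + 0.84^4/24 + 0.84^5/120 := by
    norm_num [Finset.sum_range_succ, Nat.factorial]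
  rw [h3] at h2
  norm_num [Nat.factorial] at h2 ⊢
  linarith

lemma exp1155 : (2.2372:ℝ) < Real.exp 1.155 := by
  have h1 : Real.exp (1.155:ℝ) = Real.exp 1 * Real.exp 0.155 := by
    rw [← Real.exp_add]; norm_num
  have h2 : (1.155:ℝ) ≤ Real.exp 0.155 := by
    have := Real.add_one_le_exp (0.155:ℝ); linarith
  nlinarith [Real.exp_one_gt_d9, (Real.exp_pos (0.155:ℝ)).le]

lemma expLB (s : ℝ) (h0 : 0 ≤ s) (h1 : s ≤ 1) :
    1 - Real.exp (-s) ≤ s - s ^ 2 / 2 + s ^ 3 / 6 := by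
  have habs : |(-s : ℝ)| = s := by rw [abs_neg, abs_of_nonneg h0]
  have h := Real.exp_bound (x := (-s:ℝ)) (by rw [habs]; exact h1) (n := 5) (by norm_num)
  rw [habs] at h
  have h2 := (abs_sub_le_iff.1 h).2
  have h3 : ∑ m ∈ Finset.range 5, (-s : ℝ) ^ m / m.factorial
      = 1 - s + s^2/2 - s^3/6 + s^4/24 := by
    norm_num [Finset.sum_range_succ, Nat.factorial]
    ring
  rw [h3] at h2
  have h4 : s ^ 5 ≤ s ^ 4 := pow_le_pow_of_le_one h0 h1 (by norm_num)
  norm_num [Nat.factorial] at h2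
  nlinarith [h4, pow_nonneg h0 4, h2]

lemma Qfun_mono {s t : ℝ} (h0 : 0 ≤ s) (hst : s ≤ t) (ht : t ≤ 1) :
    s - s ^ 2 / 2 + s ^ 3 / 6 ≤ t - t ^ 2 / 2 + t ^ 3 / 6 := by
  nlinarith [mul_nonneg (sub_nonneg.2 hst) (sq_nonneg (s + t - 2)),
    mul_nonneg (sub_nonneg.2 hst) (sq_nonneg (s - t)), sub_nonneg.2 hst]

lemma mono_xv {u x : ℝ} (hu : 0 < u) (hux : u ≤ x) :
    u * π / (2 * (Real.sqrt (u ^ 2 + 2 * π) + (π - 1) * u))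
      ≤ x * π / (2 * (Real.sqrt (x ^ 2 + 2 * π) + (π - 1) * x)) := by
  have hpi := Real.pi_gt_d6
  have hA : (Real.sqrt (u ^ 2 + 2 * π)) ^ 2 = u ^ 2 + 2 * π := Real.sq_sqrt (by positivity)
  have hB : (Real.sqrt (x ^ 2 + 2 * π)) ^ 2 = x ^ 2 + 2 * π := Real.sq_sqrt (by positivity)
  have hApos : 0 < Real.sqrt (u ^ 2 + 2 * π) := Real.sqrt_pos.2 (by positivity)
  have hBpos : 0 < Real.sqrt (x ^ 2 + 2 * π) := Real.sqrt_pos.2 (by positivity)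
  set A := Real.sqrt (u ^ 2 + 2 * π)
  set B := Real.sqrt (x ^ 2 + 2 * π)
  clear_value A B
  have hxpos : 0 < x := lt_of_lt_of_le hu hux
  have h1 : (u * B) ^ 2 ≤ (x * A) ^ 2 := by
    nlinarith [hA, hB, mul_nonneg (mul_nonneg Real.pi_pos.le (sub_nonneg.2 hux))
      (by linarith : (0:ℝ) ≤ x + u)]
  have hkey : u * B ≤ x * A := by
    nlinarith [h1, mul_pos hu hBpos, mul_pos hxpos hApos,
      add_pos (mul_pos hu hBpos) (mul_pos hxpos hApos)]
  have hd1 : (0:ℝ) < 2 * (A + (π - 1) * u) := by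
    nlinarith [hApos, mul_pos (by linarith : (0:ℝ) < π - 1) hu]
  have hd2 : (0:ℝ) < 2 * (B + (π - 1) * x) := by
    nlinarith [hBpos, mul_pos (by linarith : (0:ℝ) < π - 1) hxpos]
  rw [div_le_div_iff₀ hd1 hd2]
  nlinarith [hkey, Real.pi_pos, mul_pos hu hApos, mul_pos hxpos hBpos]

lemma expcomp {b a : ℝ} (hba : b ≤ a) (ha0 : a < 0) :
    ∫ t in Ioc b a, φg t ≤ φg a * ((1 - Real.exp (a * (a - b))) / (-a)) := by
  have hane : a ≠ 0 := ha0.ne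
  -- pointwise bound
  have hpt : ∀ t ∈ Ioc b a, φg t ≤ φg a * Real.exp (a * (a - t)) := by
    intro t ht
    have h1 : φg a * Real.exp (a * (a - t))
        = (Real.sqrt (2 * π))⁻¹ * Real.exp (-a ^ 2 / 2 + a * (a - t)) := by
      unfold φg; rw [Real.exp_add]; ring
    have h2 : -t ^ 2 / 2 ≤ -a ^ 2 / 2 + a * (a - t) := by nlinarith [sq_nonneg (a - t)]
    rw [h1]
    unfold φg
    have hc : (0:ℝ) ≤ (Real.sqrt (2 * π))⁻¹ := by positivity
    exact mul_le_mul_of_nonneg_left (Real.exp_le_exp.2 h2) hc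
  -- the exponential integral
  have hH : ∀ t ∈ uIcc b a, HasDerivAt (fun u : ℝ => φg a * Real.exp (a * (a - u)) / (-a))
      (φg a * Real.exp (a * (a - t))) t := by
    intro t _
    have hinner : HasDerivAt (fun u : ℝ => a * (a - u)) (-a) t := by
      have h := (((hasDerivAt_id t).const_mul a).neg).add_const (a * a)
      convert h using 1
      · rfl
      · rfl
      · funext u; simp only [id_eq, Pi.neg_apply]; ring
      · ring
    have h2 := ((hinner.exp).const_mul (φg a)).div_const (-a)
    refine h2.congr_deriv ?_
    field_simp
  have hInt : IntervalIntegrable (fun t : ℝ => φg a * Real.exp (a * (a - t))) volume b a := by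
    apply Continuous.intervalIntegrable
    fun_prop
  have hIval := intervalIntegral.integral_eq_sub_of_hasDerivAt hH hInt
  have hIoc : ∫ t in Ioc b a, φg a * Real.exp (a * (a - t))
      = φg a * ((1 - Real.exp (a * (a - b))) / (-a)) := by
    rw [← intervalIntegral.integral_of_le hba, hIval]
    have : a * (a - a) = 0 := by ring
    rw [this, Real.exp_zero]
    field_simp
    ring
  calc ∫ t in Ioc b a, φg t ≤ ∫ t in Ioc b a, φg a * Real.exp (a * (a - t)) := by
        apply setIntegral_mono_on φg_integrable.integrableOn _ measurableSet_Ioc hpt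
        exact (Continuous.integrableOn_Ioc (by fun_prop))
    _ = φg a * ((1 - Real.exp (a * (a - b))) / (-a)) := hIoc


lemma exp1155' : (3.139:ℝ) ≤ Real.exp 1.155 := by
  have h1 : Real.exp (1.155:ℝ) = Real.exp 1 * Real.exp 0.155 := by
    rw [← Real.exp_add]; norm_num
  have h2 : (1.155:ℝ) ≤ Real.exp 0.155 := by
    have := Real.add_one_le_exp (0.155:ℝ); linarith
  nlinarith [Real.exp_one_gt_d9, (Real.exp_pos (0.155:ℝ)).le]

lemma Vlow_ge {u Su q : ℝ} (hu : 0 < u) (hS : Real.sqrt (u ^ 2 + 2 * π) ≤ Su) (hq : 0 ≤ q)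
    (hnum : q * (2 * (Su + 2.141593 * u)) ≤ u * 3.141592) :
    q ≤ u * π / (2 * (Real.sqrt (u ^ 2 + 2 * π) + (π - 1) * u)) := by
  have hpi := Real.pi_gt_d6
  have hpi' := Real.pi_lt_d6
  have hsq := Real.sqrt_nonneg (u ^ 2 + 2 * π)
  have hden : 0 < 2 * (Real.sqrt (u ^ 2 + 2 * π) + (π - 1) * u) := by
    nlinarith [mul_pos (show (0:ℝ) < π - 1 by linarith) hu]
  rw [le_div_iff₀ hden]
  have h1 : q * (2 * (Real.sqrt (u ^ 2 + 2 * π) + (π - 1) * u))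
      ≤ q * (2 * (Su + 2.141593 * u)) := by
    apply mul_le_mul_of_nonneg_left _ hq
    nlinarith [hS, hu]
  nlinarith [h1, hnum, hu]

lemma coreContr {a b : ℝ} (u Su q s1 : ℝ)
    (hu0 : 0 < u) (hux : u ≤ -a)
    (hKEY : (-a) * π / (2 * (Real.sqrt (a ^ 2 + 2 * π) - (π - 1) * a))
      ≤ 1 - Real.exp (a * (a - b)))
    (hxd : (-a) * (a - b) < s1)
    (hs10 : 0 ≤ s1) (hs1b : s1 ≤ 1)
    (hQq : s1 - s1 ^ 2 / 2 + s1 ^ 3 / 6 ≤ q)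
    (hSu2 : u ^ 2 + 2 * π ≤ Su ^ 2) (hSu0 : 0 ≤ Su) (hq0 : 0 ≤ q)
    (hnum : q * (2 * (Su + 2.141593 * u)) ≤ u * 3.141592) : False := by
  have hSu : Real.sqrt (u ^ 2 + 2 * π) ≤ Su := by
    calc Real.sqrt (u ^ 2 + 2 * π) ≤ Real.sqrt (Su ^ 2) := Real.sqrt_le_sqrt hSu2
      _ = Su := Real.sqrt_sq hSu0
  have hVlow := Vlow_ge hu0 hSu hq0 hnum
  have hmono := mono_xv hu0 hux
  have hdeneq : 2 * (Real.sqrt ((-a) ^ 2 + 2 * π) + (π - 1) * (-a))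
      = 2 * (Real.sqrt (a ^ 2 + 2 * π) - (π - 1) * a) := by
    rw [neg_sq]; ring
  rw [hdeneq] at hmono
  have hE : Real.exp (-s1) < Real.exp (a * (a - b)) := by
    apply Real.exp_lt_exp.2
    nlinarith [hxd]
  have hQ := expLB s1 hs10 hs1b
  linarith [hKEY, hVlow, hmono, hE, hQ, hQq]

end GaussProofAux

open GaussProofAux

set_option maxHeartbeats 2000000 in
/-- Lemma `lem:PhiControl`: for `0 < ε < e^{-2}`,
`Φ⁻¹(ε/2) - Φ⁻¹(ε/4) ≥ √(2π)/(4 log(1/ε))`. The inverse values are expressed via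
points `a`, `b` with `Φ(a) = ε/2` and `Φ(b) = ε/4`. -/
theorem gaussCdf_inverse_quantile_gap (ε : ℝ) (hε0 : 0 < ε) (hε : ε < Real.exp (-2))
    (a b : ℝ) (ha : gaussCdf a = ε / 2) (hb : gaussCdf b = ε / 4) :
    a - b ≥ Real.sqrt (2 * Real.pi) / (4 * Real.log (1 / ε)) := by
  have hpi := Real.pi_gt_d6
  have hpi' := Real.pi_lt_d6
  by_contra hcon'
  push_neg at hcon'
  set Lg := Real.log (1 / ε) with hLgdef
  have hL2 : 2 < Lg := by
    have h1e : Real.exp 2 < 1 / ε := by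
      rw [Real.exp_neg] at hε
      rw [lt_div_iff₀ hε0]
      calc Real.exp 2 * ε < Real.exp 2 * (Real.exp 2)⁻¹ :=
            mul_lt_mul_of_pos_left hε (Real.exp_pos 2)
        _ = 1 := mul_inv_cancel₀ (Real.exp_pos 2).ne'
    rw [hLgdef]
    calc (2:ℝ) = Real.log (Real.exp 2) := (Real.log_exp 2).symm
      _ < Real.log (1 / ε) := Real.log_lt_log (Real.exp_pos 2) h1e
  have hba : b < a := by
    by_contra h
    push_neg at h
    have h2 := gaussCdf_mono h
    rw [ha, hb] at h2
    linarith
  -- Step 1 : a ≤ -1.3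
  have ha13 : a ≤ -1.3 := by
    by_contra h
    push_neg at h
    have hm := gaussCdf_mono (le_of_lt h)
    rw [ha] at hm
    have hML := millsLow (a := (-1.3:ℝ)) (by norm_num)
    have hSb : Real.sqrt ((-1.3:ℝ) ^ 2 + 2 * π) ≤ 2.8236831 := by
      have h1 : ((-1.3:ℝ) ^ 2 + 2 * π) ≤ 2.8236831 ^ 2 := by nlinarith
      calc Real.sqrt ((-1.3:ℝ) ^ 2 + 2 * π) ≤ Real.sqrt (2.8236831 ^ 2) :=
            Real.sqrt_le_sqrt h1
        _ = 2.8236831 := Real.sqrt_sq (by norm_num)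
    have hsq0 : 0 ≤ Real.sqrt ((-1.3:ℝ) ^ 2 + 2 * π) := Real.sqrt_nonneg _
    have hdenpos : 0 < Real.sqrt ((-1.3:ℝ) ^ 2 + 2 * π) - (π - 1) * (-1.3) := by nlinarith
    have hfrac : (0.560222:ℝ) ≤ π / (Real.sqrt ((-1.3:ℝ) ^ 2 + 2 * π) - (π - 1) * (-1.3)) := by
      rw [le_div_iff₀ hdenpos]
      nlinarith [hSb]
    have hφval : φg (-1.3) = (Real.sqrt (2 * π))⁻¹ * (Real.exp (-2) * Real.exp 1.155) := by
      unfold φg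
      rw [← Real.exp_add]
      norm_num
    have hsp : 0 < Real.sqrt (2 * π) := Real.sqrt_pos.2 (by positivity)
    have hiv : (0.398942:ℝ) ≤ (Real.sqrt (2 * π))⁻¹ := by
      rw [← one_div, le_div_iff₀ hsp]
      nlinarith [sqrt2pi_lt, Real.sqrt_nonneg (2 * π)]
    have hprod : Real.exp (-2) / 2
        < φg (-1.3) * (π / (Real.sqrt ((-1.3:ℝ) ^ 2 + 2 * π) - (π - 1) * (-1.3))) := by
      rw [hφval]
      have hepos := Real.exp_pos (-2:ℝ)
      have hA : (0.398942:ℝ) * 3.139 ≤ (Real.sqrt (2 * π))⁻¹ * Real.exp 1.155 :=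
        mul_le_mul hiv exp1155' (by norm_num) (by positivity)
      have hB : (0.398942:ℝ) * 3.139 * 0.560222
          ≤ ((Real.sqrt (2 * π))⁻¹ * Real.exp 1.155)
            * (π / (Real.sqrt ((-1.3:ℝ) ^ 2 + 2 * π) - (π - 1) * (-1.3))) :=
        mul_le_mul hA hfrac (by norm_num) (by positivity)
      nlinarith [hB, hepos]
    linarith [hML, hm, hprod, hε]
  have hx0 : (0:ℝ) < -a := by linarith
  -- the key comparison
  have hIoc : ∫ t in Ioc b a, φg t = ε / 4 := by
    rw [← gaussCdf_sub hba.le, ha, hb]; ring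
  have hcomp : ε / 4 ≤ φg a * ((1 - Real.exp (a * (a - b))) / (-a)) := by
    rw [← hIoc]; exact expcomp hba.le (by linarith)
  have hML := millsLow (show a ≤ -(1/2) by linarith)
  rw [ha] at hML
  have hφa := φg_pos a
  have hdenpos : 0 < Real.sqrt (a ^ 2 + 2 * π) - (π - 1) * a := by
    nlinarith [Real.sqrt_nonneg (a ^ 2 + 2 * π), mul_pos (show (0:ℝ) < π - 1 by nlinarith) hx0]
  have hKEY : (-a) * π / (2 * (Real.sqrt (a ^ 2 + 2 * π) - (π - 1) * a))
      ≤ 1 - Real.exp (a * (a - b)) := by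
    have h1 : φg a * (π / (Real.sqrt (a ^ 2 + 2 * π) - (π - 1) * a))
        ≤ φg a * (2 * ((1 - Real.exp (a * (a - b))) / (-a))) := by
      nlinarith [hML, hcomp]
    have h2 : π / (Real.sqrt (a ^ 2 + 2 * π) - (π - 1) * a)
        ≤ 2 * ((1 - Real.exp (a * (a - b))) / (-a)) :=
      le_of_mul_le_mul_left h1 hφa
    have h3 := (div_le_iff₀ hdenpos).1 h2
    rw [div_le_iff₀ (by linarith : (0:ℝ) < 2 * (Real.sqrt (a ^ 2 + 2 * π) - (π - 1) * a))]
    have h4 := mul_le_mul_of_nonneg_left h3 hx0.le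
    have hane : a ≠ 0 := by intro h; rw [h] at hx0; simp at hx0
    have h5 : (-a) * (2 * ((1 - Real.exp (a * (a - b))) / (-a))
        * (Real.sqrt (a ^ 2 + 2 * π) - (π - 1) * a))
        = (1 - Real.exp (a * (a - b))) * (2 * (Real.sqrt (a ^ 2 + 2 * π) - (π - 1) * a)) := by
      field_simp
    calc (-a) * π ≤ (-a) * (2 * ((1 - Real.exp (a * (a - b))) / (-a))
          * (Real.sqrt (a ^ 2 + 2 * π) - (π - 1) * a)) := by linarith [h4]
      _ = (1 - Real.exp (a * (a - b))) * (2 * (Real.sqrt (a ^ 2 + 2 * π) - (π - 1) * a)) := h5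
  -- common bound for the L > 2 pieces
  have hd8 : Real.sqrt (2 * π) / (4 * Lg) < 2.5066285 / 8 := by
    rw [div_lt_div_iff₀ (by linarith) (by norm_num)]
    nlinarith [sqrt2pi_lt, Real.sqrt_nonneg (2 * π), hL2]
  have hxdgen : ∀ w : ℝ, -a ≤ w → (-a) * (a - b) < w * 2.5066285 / 8 := by
    intro w hw
    have h1 : (-a) * (a - b) < (-a) * (Real.sqrt (2 * π) / (4 * Lg)) :=
      mul_lt_mul_of_pos_left hcon' hx0
    have h2 : (-a) * (Real.sqrt (2 * π) / (4 * Lg)) < (-a) * (2.5066285 / 8) :=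
      mul_lt_mul_of_pos_left hd8 hx0
    have h3 : (-a) * (2.5066285 / 8) ≤ w * (2.5066285 / 8) :=
      mul_le_mul_of_nonneg_right hw (by norm_num)
    nlinarith [h1, h2, h3]
  -- case analysis on -a
  rcases le_or_gt (-a) 1.35 with hw | hw
  · exact coreContr (a := a) (b := b) 1.3 2.8236831 0.346146 (1.35 * 2.5066285 / 8)
      (by norm_num) (by linarith) hKEY (by nlinarith [hxdgen 1.35 hw])
      (by norm_num) (by norm_num) (by norm_num) (by nlinarith) (by norm_num) (by norm_num)
      (by norm_num)
  rcases le_or_gt (-a) 1.4 with hw2 | hw2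
  · exact coreContr (a := a) (b := b) 1.35 2.8470487 0.356517 (1.4 * 2.5066285 / 8)
      (by norm_num) (by linarith) hKEY (by nlinarith [hxdgen 1.4 hw2])
      (by norm_num) (by norm_num) (by norm_num) (by nlinarith) (by norm_num) (by norm_num)
      (by norm_num)
  rcases le_or_gt (-a) 1.45 with hw3 | hw3
  · exact coreContr (a := a) (b := b) 1.4 2.871095 0.36675 (1.45 * 2.5066285 / 8)
      (by norm_num) (by linarith) hKEY (by nlinarith [hxdgen 1.45 hw3])
      (by norm_num) (by norm_num) (by norm_num) (by nlinarith) (by norm_num) (by norm_num)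
      (by norm_num)
  rcases le_or_gt (-a) 1.49 with hw4 | hw4
  · exact coreContr (a := a) (b := b) 1.45 2.8958049 0.37484 (1.49 * 2.5066285 / 8)
      (by norm_num) (by linarith) hKEY (by nlinarith [hxdgen 1.49 hw4])
      (by norm_num) (by norm_num) (by norm_num) (by nlinarith) (by norm_num) (by norm_num)
      (by norm_num)
  rcases le_or_gt (-a) 1.51 with hw5 | hw5
  · exact coreContr (a := a) (b := b) 1.49 2.9160395 0.378854 (1.51 * 2.5066285 / 8)
      (by norm_num) (by linarith) hKEY (by nlinarith [hxdgen 1.51 hw5])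
      (by norm_num) (by norm_num) (by norm_num) (by nlinarith) (by norm_num) (by norm_num)
      (by norm_num)
  rcases le_or_gt (-a) 1.53 with hw6 | hw6
  · exact coreContr (a := a) (b := b) 1.51 2.9263093 0.382847 (1.53 * 2.5066285 / 8)
      (by norm_num) (by linarith) hKEY (by nlinarith [hxdgen 1.53 hw6])
      (by norm_num) (by norm_num) (by norm_num) (by nlinarith) (by norm_num) (by norm_num)
      (by norm_num)
  -- the tail case : -a ≥ 1.53, use the sharp upper Mills bound for L
  have h153 : (1.53:ℝ) ≤ -a := hw6.le
  have hup := millsUp (show a ≤ -1 by linarith)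
  rw [ha] at hup
  have hk8 : (2.546478:ℝ) ≤ 8 / π := by
    rw [le_div_iff₀ Real.pi_pos]; nlinarith
  have hTge : (2.2107414:ℝ) ≤ Real.sqrt (a ^ 2 + 8 / π) := by
    have h1 : (2.2107414:ℝ) ^ 2 ≤ a ^ 2 + 8 / π := by
      nlinarith [hk8, h153, sq_nonneg (a + 1.53)]
    calc (2.2107414:ℝ) = Real.sqrt (2.2107414 ^ 2) := (Real.sqrt_sq (by norm_num)).symm
      _ ≤ Real.sqrt (a ^ 2 + 8 / π) := Real.sqrt_le_sqrt h1
  have hdenge : (3.7407414:ℝ) ≤ Real.sqrt (a ^ 2 + 8 / π) - a := by linarith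
  have hdenpos2 : (0:ℝ) < Real.sqrt (a ^ 2 + 8 / π) - a := by linarith
  have hup2 : ε / 2 ≤ φg a * (2 / 3.7407414) := by
    have h2 : 2 / (Real.sqrt (a ^ 2 + 8 / π) - a) ≤ 2 / 3.7407414 := by
      rw [div_le_div_iff₀ hdenpos2 (by norm_num)]
      linarith
    calc ε / 2 ≤ φg a * (2 / (Real.sqrt (a ^ 2 + 8 / π) - a)) := hup
      _ ≤ φg a * (2 / 3.7407414) := mul_le_mul_of_nonneg_left h2 hφa.le
  have hφa2 : φg a ≤ Real.exp (-a ^ 2 / 2) / 2.506628 := by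
    unfold φg
    have hsp : (0:ℝ) < Real.sqrt (2 * π) := Real.sqrt_pos.2 (by positivity)
    have h5 : (Real.sqrt (2 * π))⁻¹ ≤ (2.506628:ℝ)⁻¹ :=
      inv_anti₀ (by norm_num) sqrt2pi_gt.le
    have hep := (Real.exp_pos (-a ^ 2 / 2)).le
    calc (Real.sqrt (2 * π))⁻¹ * Real.exp (-a ^ 2 / 2)
        ≤ (2.506628:ℝ)⁻¹ * Real.exp (-a ^ 2 / 2) := mul_le_mul_of_nonneg_right h5 hep
      _ = Real.exp (-a ^ 2 / 2) / 2.506628 := by ring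
  have hεb : ε ≤ Real.exp (-(a ^ 2 / 2 + 0.84)) := by
    have h6 : ε ≤ Real.exp (-a ^ 2 / 2) * (4 / (3.7407414 * 2.506628)) := by
      have h6a : φg a * (2 / 3.7407414) ≤ (Real.exp (-a ^ 2 / 2) / 2.506628) * (2 / 3.7407414) :=
        mul_le_mul_of_nonneg_right hφa2 (by norm_num)
      have h6b : (Real.exp (-a ^ 2 / 2) / 2.506628) * (2 / 3.7407414)
          = Real.exp (-a ^ 2 / 2) * (2 / (3.7407414 * 2.506628)) := by ring
      nlinarith [hup2, h6a, h6b]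
    have h7 : (4 / (3.7407414 * 2.506628) : ℝ) ≤ Real.exp (-(0.84:ℝ)) := by
      rw [Real.exp_neg]
      have h8 : (2.316383:ℝ)⁻¹ ≤ (Real.exp 0.84)⁻¹ :=
        inv_anti₀ (Real.exp_pos 0.84) exp084.le
      have h9 : (4 / (3.7407414 * 2.506628) : ℝ) ≤ (2.316383:ℝ)⁻¹ := by norm_num
      linarith
    calc ε ≤ Real.exp (-a ^ 2 / 2) * (4 / (3.7407414 * 2.506628)) := h6
      _ ≤ Real.exp (-a ^ 2 / 2) * Real.exp (-(0.84:ℝ)) :=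
          mul_le_mul_of_nonneg_left h7 (Real.exp_pos _).le
      _ = Real.exp (-(a ^ 2 / 2 + 0.84)) := by rw [← Real.exp_add]; ring_nf
  have hLb : a ^ 2 / 2 + 0.84 ≤ Lg := by
    have h10 : Real.log ε ≤ -(a ^ 2 / 2 + 0.84) := by
      calc Real.log ε ≤ Real.log (Real.exp (-(a ^ 2 / 2 + 0.84))) :=
            Real.log_le_log hε0 hεb
        _ = -(a ^ 2 / 2 + 0.84) := Real.log_exp _
    rw [hLgdef, one_div, Real.log_inv]
    linarith
  have hLpos : (0:ℝ) < Lg := by linarith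
  have hxdl : (-a) * (a - b) < 0.47691 := by
    have h1 : (-a) * (a - b) < (-a) * (Real.sqrt (2 * π) / (4 * Lg)) :=
      mul_lt_mul_of_pos_left hcon' hx0
    have hLg4 : (0:ℝ) < 4 * Lg := by linarith
    have hpos2 : (0:ℝ) < 2 * a ^ 2 + 3.36 := by positivity
    have h2 : Real.sqrt (2 * π) / (4 * Lg) ≤ 2.5066285 / (4 * Lg) :=
      (div_le_div_iff_of_pos_right hLg4).2 sqrt2pi_lt.le
    have h3 : (2.5066285:ℝ) / (4 * Lg) ≤ 2.5066285 / (2 * a ^ 2 + 3.36) := by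
      rw [div_le_div_iff₀ hLg4 hpos2]
      nlinarith [hLb]
    have h4 : (-a) * (2.5066285 / (2 * a ^ 2 + 3.36)) ≤ 0.47691 := by
      rw [show (-a) * (2.5066285 / (2 * a ^ 2 + 3.36))
          = (-a) * 2.5066285 / (2 * a ^ 2 + 3.36) from (mul_div_assoc _ _ _).symm,
        div_le_iff₀ hpos2]
      nlinarith [sq_nonneg (a + 1.53), h153]
    have h5 : (-a) * (Real.sqrt (2 * π) / (4 * Lg)) ≤ (-a) * (2.5066285 / (2 * a ^ 2 + 3.36)) :=
      mul_le_mul_of_nonneg_left (le_trans h2 h3) hx0.le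
    linarith
  exact coreContr (a := a) (b := b) 1.53 2.9366795 0.381267 0.47691
    (by norm_num) h153 hKEY hxdl
    (by norm_num) (by norm_num) (by norm_num) (by nlinarith) (by norm_num) (by norm_num)
    (by norm_num)

end
end

section
/- Let f(t) = e^{−g(t)} be a log-concave probability density on ℝ (g : ℝ → ℝ convex) whose associated distribution has variance 1, and let m denote its median. Then f(m) ≥ e^{−4}/2. -/
open MeasureTheory Real

noncomputable section

/-- Lemma `density lower bound`: a log-concave probability density
`f = e^{-g}` on `ℝ` with variance `1` satisfies `f(m) ≥ e^{-4}/2` at its median `m`. -/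
theorem logconcave_density_lower_bound_at_median
    (g : ℝ → ℝ) (hg : ConvexOn ℝ Set.univ g)
    (hint : Integrable fun t => Real.exp (-g t))
    (hint1 : Integrable fun t => t * Real.exp (-g t))
    (hint2 : Integrable fun t => t ^ 2 * Real.exp (-g t))
    -- `e^{-g}` is a probability density
    (hmass : ∫ t, Real.exp (-g t) = 1)
    -- with variance 1
    (hvar : (∫ t, t ^ 2 * Real.exp (-g t)) - (∫ t, t * Real.exp (-g t)) ^ 2 = 1)
    -- `m` is the median
    (m : ℝ) (hm : ∫ t in Set.Iio m, Real.exp (-g t) = 1 / 2) :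
    Real.exp (-g m) ≥ Real.exp (-4) / 2 := by
  set E : ℝ → ℝ := fun t => Real.exp (-g t) with hE
  have hEpos : ∀ t, 0 < E t := fun t => Real.exp_pos _
  have hEnn : 0 ≤ᶠ[ae volume] E := Filter.Eventually.of_forall fun t => (hEpos t).le
  set μ : ℝ := ∫ t, t * E t with hμ
  -- integrability of (t-μ)^2 * E t
  have hint3 : Integrable fun t => (t - μ)^2 * E t := by
    have heq : (fun t => (t - μ)^2 * E t) =
        fun t => (t^2 * E t - (2*μ) * (t * E t)) + μ^2 * E t := by
      funext t; ring
    rw [heq]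
    exact (hint2.sub (hint1.const_mul (2*μ))).add (hint.const_mul (μ^2))
  have hvarμ : ∫ t, (t - μ)^2 * E t = 1 := by
    have h1 : ∫ t, (t - μ)^2 * E t
        = ∫ t, ((t^2 * E t - (2*μ) * (t * E t)) + μ^2 * E t) := by
      congr 1; funext t; ring
    have hA : Integrable (fun t => t^2 * E t - (2*μ) * (t * E t)) := by
      exact hint2.sub (hint1.const_mul (2*μ))
    rw [h1, integral_add hA (hint.const_mul _),
      integral_sub hint2 (hint1.const_mul _), integral_const_mul, integral_const_mul,
      hmass, ← hμ]
    nlinarith [hvar]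
  -- Chebyshev on both tails
  have hint3' : Integrable fun t => (t - μ)^2/4 * E t :=
    (hint3.const_mul (1/4)).congr (Filter.Eventually.of_forall fun t => by ring)
  have hquarter : ∫ t, (t - μ)^2/4 * E t = 1/4 := by
    have : ∫ t, (t - μ)^2/4 * E t = (1/4) * ∫ t, (t - μ)^2 * E t := by
      rw [← integral_const_mul]; congr 1; funext t; ring
    rw [this, hvarμ]; norm_num
  have cheb : ∀ s : Set ℝ, MeasurableSet s → (∀ t ∈ s, 2 ≤ |t - μ|) →
      ∫ t in s, E t ≤ 1/4 := by
    intro s hs hts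
    have h1 : ∫ t in s, E t ≤ ∫ t in s, (t - μ)^2/4 * E t := by
      refine setIntegral_mono_on hint.integrableOn hint3'.integrableOn hs ?_
      intro t ht
      have h2 := hts t ht
      have h3 : 4 ≤ (t - μ)^2 := by
        have := abs_nonneg (t - μ)
        nlinarith [sq_abs (t - μ)]
      nlinarith [(hEpos t).le]
    have h2 : ∫ t in s, (t - μ)^2/4 * E t ≤ ∫ t, (t - μ)^2/4 * E t := by
      refine setIntegral_le_integral hint3' (Filter.Eventually.of_forall fun t => ?_)
      positivity
    linarith [hquarter ▸ h2, h1]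
  have chebR : ∫ t in Set.Ioi (μ + 2), E t ≤ 1/4 := by
    refine cheb _ measurableSet_Ioi fun t ht => ?_
    rw [Set.mem_Ioi] at ht
    rw [abs_of_nonneg (by linarith)]; linarith
  have chebL : ∫ t in Set.Iio (μ - 2), E t ≤ 1/4 := by
    refine cheb _ measurableSet_Iio fun t ht => ?_
    rw [Set.mem_Iio] at ht
    rw [abs_of_nonpos (by linarith)]; linarith
  -- mass on the right of m is 1/2
  have hIic : ∫ t in Set.Iic m, E t = 1/2 := by
    rw [← setIntegral_congr_set Iio_ae_eq_Iic]; exact hm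
  have hIoi : ∫ t in Set.Ioi m, E t = 1/2 := by
    have := intervalIntegral.integral_Iic_add_Ioi (b := m) hint.integrableOn hint.integrableOn
    rw [hIic, hmass] at this; linarith
  -- m is within 2 of the mean
  have hm2 : m ≤ μ + 2 := by
    by_contra h
    push_neg at h
    have hsub : ∫ t in Set.Ioi m, E t ≤ ∫ t in Set.Ioi (μ + 2), E t := by
      refine setIntegral_mono_set hint.integrableOn
        (Filter.Eventually.of_forall fun t => (hEpos t).le) ?_
      exact Filter.Eventually.of_forall (Set.Ioi_subset_Ioi h.le)
    rw [hIoi] at hsub; linarith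
  have hm1 : μ - 2 ≤ m := by
    by_contra h
    push_neg at h
    have hsub : ∫ t in Set.Iio m, E t ≤ ∫ t in Set.Iio (μ - 2), E t := by
      refine setIntegral_mono_set hint.integrableOn
        (Filter.Eventually.of_forall fun t => (hEpos t).le) ?_
      exact Filter.Eventually.of_forall (Set.Iio_subset_Iio h.le)
    rw [hm] at hsub; linarith
  -- mass at least 1/4 on [m, m+4]
  have hmassR : 1/4 ≤ ∫ t in Set.Icc m (m + 4), E t := by
    have hsplit : (∫ t in Set.Ioc m (μ + 2), E t) + ∫ t in Set.Ioi (μ + 2), E t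
        = 1/2 := by
      rw [← setIntegral_union (Set.Ioc_disjoint_Ioi le_rfl) measurableSet_Ioi
        hint.integrableOn hint.integrableOn, Set.Ioc_union_Ioi_eq_Ioi hm2, hIoi]
    have hsub : ∫ t in Set.Ioc m (μ + 2), E t ≤ ∫ t in Set.Icc m (m + 4), E t := by
      refine setIntegral_mono_set hint.integrableOn
        (Filter.Eventually.of_forall fun t => (hEpos t).le)
        (Filter.Eventually.of_forall ?_)
      intro t ht
      exact ⟨ht.1.le, by linarith [ht.2]⟩
    linarith
  -- mass at least 1/4 on [m-4, m]
  have hmassL : 1/4 ≤ ∫ t in Set.Icc (m - 4) m, E t := by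
    have hsplit : (∫ t in Set.Iio (μ - 2), E t) + ∫ t in Set.Ico (μ - 2) m, E t
        = 1/2 := by
      rw [← setIntegral_union ((Set.Iio_disjoint_Ici le_rfl).mono_right Set.Ico_subset_Ici_self) measurableSet_Ico
        hint.integrableOn hint.integrableOn, Set.Iio_union_Ico_eq_Iio hm1, hm]
    have hsub : ∫ t in Set.Ico (μ - 2) m, E t ≤ ∫ t in Set.Icc (m - 4) m, E t := by
      refine setIntegral_mono_set hint.integrableOn
        (Filter.Eventually.of_forall fun t => (hEpos t).le)
        (Filter.Eventually.of_forall ?_)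
      intro t ht
      exact ⟨by linarith [ht.1], ht.2.le⟩
    linarith
  -- find witness points with density at least 1/17
  have hwit : ∀ a b : ℝ, b = a + 4 → 1/4 ≤ ∫ t in Set.Icc a b, E t →
      ∃ x ∈ Set.Icc a b, (1:ℝ)/17 ≤ E x := by
    intro a b hab hmassab
    subst hab
    by_contra h
    push_neg at h
    have hle : ∫ t in Set.Icc a (a + 4), E t ≤ ∫ t in Set.Icc a (a + 4), (1:ℝ)/17 := by
      refine setIntegral_mono_on hint.integrableOn (integrableOn_const ?_)
        measurableSet_Icc fun t ht => (h t ht).le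
      rw [Real.volume_Icc]; exact ENNReal.ofReal_ne_top
    rw [setIntegral_const, measureReal_def, Real.volume_Icc, smul_eq_mul] at hle
    have h4 : (ENNReal.ofReal (a + 4 - a)).toReal = 4 := by
      rw [ENNReal.toReal_ofReal (by linarith)]; ring
    rw [h4] at hle
    linarith
  obtain ⟨x, hx, hfx⟩ := hwit m (m + 4) rfl hmassR
  obtain ⟨y, hy, hfy⟩ := hwit (m - 4) m (by ring) hmassL
  -- convexity: g m ≤ max (g y) (g x)
  have hyx : y ≤ x := le_trans hy.2 hx.1
  have hmem : m ∈ segment ℝ y x := by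
    rw [segment_eq_Icc hyx]; exact ⟨hy.2, hx.1⟩
  have hgm : g m ≤ max (g y) (g x) :=
    hg.le_on_segment (Set.mem_univ y) (Set.mem_univ x) hmem
  have h17 : (1:ℝ)/17 ≤ E m := by
    rcases le_total (g y) (g x) with hc | hc
    · have : g m ≤ g x := le_trans hgm (by simp [hc])
      calc (1:ℝ)/17 ≤ E x := hfx
        _ ≤ E m := Real.exp_le_exp.2 (by linarith)
    · have : g m ≤ g y := le_trans hgm (by simp [hc])
      calc (1:ℝ)/17 ≤ E y := hfy
        _ ≤ E m := Real.exp_le_exp.2 (by linarith)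
  -- numerics: e^{-4}/2 ≤ 1/17
  have hnum : Real.exp (-4) / 2 ≤ 1/17 := by
    have h1 : (2.7182818283:ℝ) < Real.exp 1 := Real.exp_one_gt_d9
    have h2 : Real.exp 1 ^ (4:ℕ) = Real.exp 4 := by
      rw [Real.exp_one_pow]; norm_num
    have h0 : (2:ℝ) ≤ Real.exp 1 := by linarith
    have h2' : (2:ℝ)^4 ≤ Real.exp 1 ^ 4 := pow_le_pow_left₀ (by norm_num) h0 4
    have h3 : (8.5:ℝ) ≤ Real.exp 4 := by rw [← h2]; nlinarith
    have h5 : Real.exp (-4) * Real.exp 4 = 1 := by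
      rw [← Real.exp_add]; norm_num
    nlinarith [(Real.exp_pos (-4)).le,
      mul_nonneg (Real.exp_pos (-4)).le (by linarith : (0:ℝ) ≤ Real.exp 4 - 8.5)]
  calc Real.exp (-g m) = E m := rfl
    _ ≥ 1/17 := h17
    _ ≥ Real.exp (-4)/2 := hnum
end
end

section
/- Let f(t) = e^{−g(t)} be a log-concave probability density on ℝ (g : ℝ → ℝ convex) whose associated distribution has variance 1 and median 0. Then for all t ∈ [ −1/(3e⁴), 1/(3e⁴) ], one has f(t) ≥ 1/(4e⁴). -/
open MeasureTheory Real Set Filter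

noncomputable section
set_option maxHeartbeats 1000000







lemma exists_small (g : ℝ → ℝ)
    (hint : Integrable fun t => Real.exp (-g t))
    (hmass : ∫ t, Real.exp (-g t) = 1) (x₀ : ℝ) :
    ∃ x₁ ∈ Set.Ioc x₀ (x₀ + 3 / Real.exp (-g x₀)),
      Real.exp (-g x₁) ≤ Real.exp (-g x₀) / 2 := by
  set M := Real.exp (-g x₀) with hMdef
  have hM : 0 < M := Real.exp_pos _
  by_contra hc
  push_neg at hc
  have hle : ∀ x ∈ Set.Ioc x₀ (x₀ + 3 / M), M / 2 ≤ Real.exp (-g x) :=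
    fun x hx => (hc x hx).le
  have h1 : ∫ t in Set.Ioc x₀ (x₀ + 3 / M), (M / 2) ≤
      ∫ t in Set.Ioc x₀ (x₀ + 3 / M), Real.exp (-g t) := by
    apply setIntegral_mono_on (integrable_const _) hint.integrableOn
      measurableSet_Ioc hle
  have h2 : ∫ t in Set.Ioc x₀ (x₀ + 3 / M), Real.exp (-g t) ≤ 1 := by
    rw [← hmass]
    exact setIntegral_le_integral hint (Filter.Eventually.of_forall fun t => (Real.exp_pos _).le)
  rw [setIntegral_const] at h1
  rw [measureReal_def, Real.volume_Ioc] at h1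
  have h3 : (x₀ + 3 / M) - x₀ = 3 / M := by ring
  rw [h3, ENNReal.toReal_ofReal (by positivity)] at h1
  have : (3 / M) * (M / 2) = 3 / 2 := by field_simp
  rw [smul_eq_mul, this] at h1
  linarith

lemma decay (g : ℝ → ℝ) (hg : ConvexOn ℝ Set.univ g) {x₀ x₁ x : ℝ}
    (h01 : x₀ < x₁) (hx : x₁ ≤ x)
    (hhalf : Real.exp (-g x₁) ≤ Real.exp (-g x₀) / 2) :
    g x₀ + Real.log 2 * ((x - x₀) / (x₁ - x₀)) ≤ g x := by
  have hd : 0 < x₁ - x₀ := by linarith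
  have hx0 : 0 < x - x₀ := by linarith
  have hg1 : g x₀ + Real.log 2 ≤ g x₁ := by
    have h2 : Real.exp (-g x₁) ≤ Real.exp (Real.log (Real.exp (-g x₀) / 2)) := by
      rwa [Real.exp_log (by positivity)]
    have h3 : -g x₁ ≤ Real.log (Real.exp (-g x₀) / 2) := Real.exp_le_exp.mp h2
    rw [Real.log_div (Real.exp_ne_zero _) two_ne_zero, Real.log_exp] at h3
    linarith
  -- convexity
  have ha : (0:ℝ) ≤ (x - x₁) / (x - x₀) := by
    apply div_nonneg <;> linarith
  have hb : (0:ℝ) ≤ (x₁ - x₀) / (x - x₀) := by positivity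
  have hab : (x - x₁) / (x - x₀) + (x₁ - x₀) / (x - x₀) = 1 := by
    field_simp
    ring
  have hcvx := hg.2 (Set.mem_univ x₀) (Set.mem_univ x)
    ha hb hab
  have hpt : ((x - x₁) / (x - x₀)) • x₀ + ((x₁ - x₀) / (x - x₀)) • x = x₁ := by
    rw [smul_eq_mul, smul_eq_mul]
    field_simp
    ring
  rw [hpt, smul_eq_mul, smul_eq_mul] at hcvx
  -- combine : g x₁ ≤ a g x₀ + b g x, g x₁ ≥ g x₀ + log 2
  have key : (g x₀ + Real.log 2) * (x - x₀) ≤ (x - x₁) * g x₀ + (x₁ - x₀) * g x := by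
    have := hcvx
    have h4 : g x₀ + Real.log 2 ≤ (x - x₁) / (x - x₀) * g x₀ + (x₁ - x₀) / (x - x₀) * g x :=
      le_trans hg1 hcvx
    calc (g x₀ + Real.log 2) * (x - x₀)
        ≤ ((x - x₁) / (x - x₀) * g x₀ + (x₁ - x₀) / (x - x₀) * g x) * (x - x₀) := by
          exact mul_le_mul_of_nonneg_right h4 hx0.le
      _ = (x - x₁) * g x₀ + (x₁ - x₀) * g x := by field_simp
  have h5 : (x₁ - x₀) * (g x₀ + Real.log 2 * ((x - x₀) / (x₁ - x₀)))
      = (x₁ - x₀) * g x₀ + Real.log 2 * (x - x₀) := by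
    field_simp
  have h6 : (x₁ - x₀) * (g x₀ + Real.log 2 * ((x - x₀) / (x₁ - x₀)))
      ≤ (x₁ - x₀) * g x := by rw [h5]; nlinarith [key]
  exact (mul_le_mul_iff_right₀ hd).mp h6







lemma tendsto_poly_exp {β : ℝ} (hβ : 0 < β) (a b : ℝ) (n : ℕ) :
    Tendsto (fun t : ℝ => (t - a) ^ n * Real.exp (-β * (t - b))) atTop (nhds 0) := by
  have h1 : Tendsto (fun t : ℝ => β * (t - a)) atTop atTop := by
    apply Tendsto.const_mul_atTop hβ
    exact tendsto_atTop_add_const_right atTop (-a) tendsto_id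
  have h2 : Tendsto (fun t : ℝ => (β * (t - a)) ^ n * Real.exp (-(β * (t - a)))) atTop (nhds 0) :=
    (tendsto_pow_mul_exp_neg_atTop_nhds_zero n).comp h1
  have h3 := h2.mul_const (Real.exp (-(β * (a - b))) / β ^ n)
  rw [zero_mul] at h3
  apply h3.congr
  intro t
  rw [mul_pow]
  have hb : (β:ℝ) ^ n ≠ 0 := by positivity
  have he : Real.exp (-(β * (t - a))) * Real.exp (-(β * (a - b))) = Real.exp (-(β * (t - b))) := by
    rw [← Real.exp_add]; congr 1; ring
  have he2 : Real.exp (-β * (t - b)) = Real.exp (-(β * (t - b))) := by ring_nf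
  rw [he2]
  field_simp
  rw [← he, mul_comm (t - a) β]
  ring


lemma tail_right (g : ℝ → ℝ) (hg : ConvexOn ℝ Set.univ g)
    (hint : Integrable fun t => Real.exp (-g t))
    (hmass : ∫ t, Real.exp (-g t) = 1) (x₀ : ℝ)
    (hf2 : Integrable fun t => (t - x₀) ^ 2 * Real.exp (-g t)) :
    ∫ t in Set.Ioi x₀, (t - x₀) ^ 2 * Real.exp (-g t) ≤ 182 / (Real.exp (-g x₀)) ^ 2 := by
  obtain ⟨M, hMdef⟩ : ∃ M, M = Real.exp (-g x₀) := ⟨_, rfl⟩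
  rw [← hMdef]
  have hM : 0 < M := hMdef ▸ Real.exp_pos _
  obtain ⟨x₁, hx₁mem, hx₁half⟩ := exists_small g hint hmass x₀
  rw [← hMdef] at hx₁mem
  obtain ⟨hx₀₁, hx₁le⟩ := hx₁mem
  obtain ⟨d, hddef⟩ : ∃ d, d = x₁ - x₀ := ⟨_, rfl⟩
  have hd : 0 < d := by rw [hddef]; linarith
  have hd3 : d ≤ 3 / M := by rw [hddef]; linarith
  obtain ⟨β, hβdef⟩ : ∃ β, β = Real.log 2 / d := ⟨_, rfl⟩
  have hlog2 : (0.6931471803 : ℝ) < Real.log 2 := Real.log_two_gt_d9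
  have hβ : 0 < β := by rw [hβdef]; positivity
  have hβinv : 1 / β ≤ 3 / 2 * d := by
    rw [hβdef, one_div_div, div_le_iff₀ (by linarith)]
    nlinarith
  -- pointwise decay bound on Ioi x₁
  have hdecay : ∀ t ∈ Set.Ioi x₁, (t - x₀) ^ 2 * Real.exp (-g t)
      ≤ M / 2 * Real.exp (-β * (t - x₁)) * (t - x₀) ^ 2 := by
    intro t ht
    have ht' : x₁ ≤ t := (Set.mem_Ioi.mp ht).le
    have hgb := decay g hg hx₀₁ ht' (hMdef ▸ hx₁half)
    have h1 : Real.exp (-g t) ≤ M / 2 * Real.exp (-β * (t - x₁)) := by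
      have h2 : -g t ≤ -g x₀ - Real.log 2 * ((t - x₀) / d) := by
        rw [hddef]; linarith
      have h3 : Real.exp (-g t) ≤ Real.exp (-g x₀ - Real.log 2 * ((t - x₀) / d)) :=
        Real.exp_le_exp.mpr h2
      have h4 : Real.exp (-g x₀ - Real.log 2 * ((t - x₀) / d))
          = M / 2 * Real.exp (-β * (t - x₁)) := by
        rw [hMdef, Real.exp_sub]
        have h5 : Real.log 2 * ((t - x₀) / d) = Real.log 2 + β * (t - x₁) := by
          rw [hβdef]
          have ht0 : t - x₀ = d + (t - x₁) := by rw [hddef]; ring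
          rw [ht0]
          field_simp
        rw [h5, Real.exp_add, Real.exp_log two_pos, Real.exp_neg]
        have hepos : 0 < Real.exp (β * (t - x₁)) := Real.exp_pos _
        have hee : Real.exp (-(β * (t - x₁))) * Real.exp (β * (t - x₁)) = 1 := by
          rw [← Real.exp_add]; simp
        field_simp
        linear_combination (-1 : ℝ) * hee
      linarith [h3, h4.symm.le]
    have hsq : (0:ℝ) ≤ (t - x₀) ^ 2 := sq_nonneg _
    calc (t - x₀) ^ 2 * Real.exp (-g t) ≤ (t - x₀) ^ 2 * (M / 2 * Real.exp (-β * (t - x₁))) :=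
          mul_le_mul_of_nonneg_left h1 hsq
      _ = M / 2 * Real.exp (-β * (t - x₁)) * (t - x₀) ^ 2 := by ring
  -- FTC computation of the majorant integral
  obtain ⟨G, hGdef⟩ : ∃ G : ℝ → ℝ, G = fun t => -(M / 2) * (Real.exp (-β * (t - x₁)) *
      ((t - x₀) ^ 2 / β + 2 * (t - x₀) / β ^ 2 + 2 / β ^ 3)) := ⟨_, rfl⟩
  have hβne : β ≠ 0 := ne_of_gt hβ
  have hGderiv : ∀ t ∈ Set.Ici x₁, HasDerivAt G
      (M / 2 * Real.exp (-β * (t - x₁)) * (t - x₀) ^ 2) t := by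
    intro t _
    have h1 : HasDerivAt (fun t : ℝ => -β * (t - x₁)) (-β) t := by
      simpa using ((hasDerivAt_id t).sub_const x₁).const_mul (-β)
    have h2 : HasDerivAt (fun t : ℝ => Real.exp (-β * (t - x₁)))
        (Real.exp (-β * (t - x₁)) * (-β)) t := h1.exp
    have h3 : HasDerivAt (fun t : ℝ => (t - x₀) ^ 2 / β + 2 * (t - x₀) / β ^ 2 + 2 / β ^ 3)
        (2 * (t - x₀) / β + 2 / β ^ 2) t := by
      have h3a : HasDerivAt (fun t : ℝ => t - x₀) 1 t := (hasDerivAt_id t).sub_const x₀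
      have h3b : HasDerivAt (fun t : ℝ => (t - x₀) ^ 2) (2 * (t - x₀)) t := by
        simpa using h3a.fun_pow 2
      have h3c := (h3b.div_const β).add ((h3a.const_mul 2).div_const (β ^ 2))
      have h3d := h3c.add_const (2 / β ^ 3)
      exact h3d.congr_deriv (by ring)
    have h4 := (h2.mul h3).const_mul (-(M / 2))
    rw [hGdef]
    have h5 : M / 2 * Real.exp (-β * (t - x₁)) * (t - x₀) ^ 2
        = -(M / 2) * (Real.exp (-β * (t - x₁)) * (-β) *
            ((t - x₀) ^ 2 / β + 2 * (t - x₀) / β ^ 2 + 2 / β ^ 3)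
          + Real.exp (-β * (t - x₁)) * (2 * (t - x₀) / β + 2 / β ^ 2)) := by
      field_simp
      ring
    rw [h5]
    exact h4
  have hGtend : Tendsto G atTop (nhds 0) := by
    have t2 := (tendsto_poly_exp hβ x₀ x₁ 2).mul_const (-(M / 2) / β)
    have t1 := (tendsto_poly_exp hβ x₀ x₁ 1).mul_const (-(M / 2) * 2 / β ^ 2)
    have t0 := (tendsto_poly_exp hβ x₀ x₁ 0).mul_const (-(M / 2) * 2 / β ^ 3)
    have hT := (t2.add t1).add t0
    simp only [zero_mul, add_zero] at hT
    apply hT.congr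
    intro t
    rw [hGdef]
    simp only [pow_zero, pow_one, one_mul]
    field_simp
    ring
  have hGcont : ContinuousWithinAt G (Set.Ici x₁) x₁ :=
    ((hGderiv x₁ Set.self_mem_Ici).continuousAt).continuousWithinAt
  have hφpos : ∀ t ∈ Set.Ioi x₁, 0 ≤ M / 2 * Real.exp (-β * (t - x₁)) * (t - x₀) ^ 2 := by
    intro t _
    positivity
  have hGderiv' : ∀ t ∈ Set.Ioi x₁, HasDerivAt G
      (M / 2 * Real.exp (-β * (t - x₁)) * (t - x₀) ^ 2) t :=
    fun t ht => hGderiv t (Set.mem_Ici.mpr (Set.mem_Ioi.mp ht).le)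
  have hmajint : IntegrableOn (fun t => M / 2 * Real.exp (-β * (t - x₁)) * (t - x₀) ^ 2)
      (Set.Ioi x₁) :=
    integrableOn_Ioi_deriv_of_nonneg hGcont hGderiv' hφpos hGtend
  have hmajval : ∫ t in Set.Ioi x₁, M / 2 * Real.exp (-β * (t - x₁)) * (t - x₀) ^ 2
      = M / 2 * (d ^ 2 / β + 2 * d / β ^ 2 + 2 / β ^ 3) := by
    rw [integral_Ioi_of_hasDerivAt_of_nonneg hGcont hGderiv' hφpos hGtend]
    have hGx₁ : G x₁ = -(M / 2) * ((x₁ - x₀) ^ 2 / β + 2 * (x₁ - x₀) / β ^ 2 + 2 / β ^ 3) := by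
      rw [hGdef]
      simp only [sub_self, mul_zero, Real.exp_zero, one_mul]
    rw [hGx₁, ← hddef]
    ring
  -- split integral
  have hsplit : ∫ t in Set.Ioi x₀, (t - x₀) ^ 2 * Real.exp (-g t)
      = (∫ t in Set.Ioc x₀ x₁, (t - x₀) ^ 2 * Real.exp (-g t))
        + ∫ t in Set.Ioi x₁, (t - x₀) ^ 2 * Real.exp (-g t) := by
    rw [← setIntegral_union (Set.Ioc_disjoint_Ioi le_rfl) measurableSet_Ioi
      hf2.integrableOn hf2.integrableOn]
    rw [Set.Ioc_union_Ioi_eq_Ioi hx₀₁.le]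
  -- part 1
  have hpart1 : ∫ t in Set.Ioc x₀ x₁, (t - x₀) ^ 2 * Real.exp (-g t) ≤ 9 / M ^ 2 := by
    have hb1 : ∫ t in Set.Ioc x₀ x₁, (t - x₀) ^ 2 * Real.exp (-g t)
        ≤ ∫ t in Set.Ioc x₀ x₁, d ^ 2 * Real.exp (-g t) := by
      apply setIntegral_mono_on hf2.integrableOn
        (hint.const_mul _).integrableOn measurableSet_Ioc
      intro t ht
      have h1 : t - x₀ ≤ d := by rw [hddef]; linarith [ht.2]
      have h2 : 0 < t - x₀ := by linarith [ht.1]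
      have hsq : (t - x₀) ^ 2 ≤ d ^ 2 := by nlinarith
      exact mul_le_mul_of_nonneg_right hsq (Real.exp_pos _).le
    have hb2 : ∫ t in Set.Ioc x₀ x₁, d ^ 2 * Real.exp (-g t)
        = d ^ 2 * ∫ t in Set.Ioc x₀ x₁, Real.exp (-g t) := integral_const_mul _ _
    have hb3 : ∫ t in Set.Ioc x₀ x₁, Real.exp (-g t) ≤ 1 := by
      rw [← hmass]
      exact setIntegral_le_integral hint (Filter.Eventually.of_forall fun t => (Real.exp_pos _).le)
    have hb4 : d ^ 2 ≤ 9 / M ^ 2 := by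
      have h1 : d ^ 2 ≤ (3 / M) ^ 2 := pow_le_pow_left₀ hd.le hd3 2
      have h2 : (3 / M) ^ 2 = 9 / M ^ 2 := by
        rw [div_pow]; norm_num
      linarith
    calc ∫ t in Set.Ioc x₀ x₁, (t - x₀) ^ 2 * Real.exp (-g t)
        ≤ d ^ 2 * ∫ t in Set.Ioc x₀ x₁, Real.exp (-g t) := by rw [← hb2]; exact hb1
      _ ≤ d ^ 2 * 1 := mul_le_mul_of_nonneg_left hb3 (sq_nonneg d)
      _ = d ^ 2 := mul_one _
      _ ≤ 9 / M ^ 2 := hb4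
  -- part 2
  have hpart2 : ∫ t in Set.Ioi x₁, (t - x₀) ^ 2 * Real.exp (-g t) ≤ 173 / M ^ 2 := by
    have hb1 : ∫ t in Set.Ioi x₁, (t - x₀) ^ 2 * Real.exp (-g t)
        ≤ ∫ t in Set.Ioi x₁, M / 2 * Real.exp (-β * (t - x₁)) * (t - x₀) ^ 2 :=
      setIntegral_mono_on hf2.integrableOn hmajint measurableSet_Ioi hdecay
    rw [hmajval] at hb1
    have hβi : 0 < 1 / β := by positivity
    have e1 : d ^ 2 / β ≤ 3 / 2 * d ^ 3 := by
      have h : d ^ 2 / β = d ^ 2 * (1 / β) := by ring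
      rw [h]
      calc d ^ 2 * (1 / β) ≤ d ^ 2 * (3 / 2 * d) :=
            mul_le_mul_of_nonneg_left hβinv (sq_nonneg d)
        _ = 3 / 2 * d ^ 3 := by ring
    have e2 : 2 * d / β ^ 2 ≤ 2 * (9 / 4) * d ^ 3 := by
      have h2 : (1 / β) ^ 2 ≤ (3 / 2 * d) ^ 2 := pow_le_pow_left₀ hβi.le hβinv 2
      have h : 2 * d / β ^ 2 = 2 * d * (1 / β) ^ 2 := by
        field_simp
      rw [h]
      calc 2 * d * (1 / β) ^ 2 ≤ 2 * d * (3 / 2 * d) ^ 2 :=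
            mul_le_mul_of_nonneg_left h2 (by linarith)
        _ = 2 * (9 / 4) * d ^ 3 := by ring
    have e3 : 2 / β ^ 3 ≤ 2 * (27 / 8) * d ^ 3 := by
      have h2 : (1 / β) ^ 3 ≤ (3 / 2 * d) ^ 3 := pow_le_pow_left₀ hβi.le hβinv 3
      have h : 2 / β ^ 3 = 2 * (1 / β) ^ 3 := by
        field_simp
      rw [h]
      calc 2 * (1 / β) ^ 3 ≤ 2 * (3 / 2 * d) ^ 3 :=
            mul_le_mul_of_nonneg_left h2 (by norm_num)
        _ = 2 * (27 / 8) * d ^ 3 := by ring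
    have hd27 : d ^ 3 ≤ 27 / M ^ 3 := by
      have h1 : d ^ 3 ≤ (3 / M) ^ 3 := pow_le_pow_left₀ hd.le hd3 3
      have h2 : (3 / M) ^ 3 = 27 / M ^ 3 := by
        rw [div_pow]; norm_num
      linarith
    have hs1 : M / 2 * (d ^ 2 / β + 2 * d / β ^ 2 + 2 / β ^ 3) ≤ M / 2 * (51 / 4 * d ^ 3) := by
      apply mul_le_mul_of_nonneg_left _ (by positivity)
      linarith [e1, e2, e3]
    have hs2 : M / 2 * (51 / 4 * d ^ 3) ≤ 173 / M ^ 2 := by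
      calc M / 2 * (51 / 4 * d ^ 3) = 51 / 8 * M * d ^ 3 := by ring
        _ ≤ 51 / 8 * M * (27 / M ^ 3) := mul_le_mul_of_nonneg_left hd27 (by positivity)
        _ = 1377 / 8 / M ^ 2 := by field_simp; ring
        _ ≤ 173 / M ^ 2 := by
            apply (div_le_div_iff_of_pos_right (by positivity)).mpr
            norm_num
    linarith
  rw [hsplit]
  have hfin : (9:ℝ) / M ^ 2 + 173 / M ^ 2 = 182 / M ^ 2 := by ring
  linarith

lemma integrable_shift (g : ℝ → ℝ)
    (hint : Integrable fun t => Real.exp (-g t))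
    (hint1 : Integrable fun t => t * Real.exp (-g t))
    (hint2 : Integrable fun t => t ^ 2 * Real.exp (-g t)) (x : ℝ) :
    Integrable fun t => (t - x) ^ 2 * Real.exp (-g t) := by
  have h : (fun t => (t - x) ^ 2 * Real.exp (-g t))
      = fun t => (t ^ 2 * Real.exp (-g t) - 2 * x * (t * Real.exp (-g t)))
          + x ^ 2 * Real.exp (-g t) := by
    funext t; ring
  rw [h]
  exact (hint2.sub (hint1.const_mul (2 * x))).add (hint.const_mul (x ^ 2))

lemma integral_shift (g : ℝ → ℝ)
    (hint : Integrable fun t => Real.exp (-g t))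
    (hint1 : Integrable fun t => t * Real.exp (-g t))
    (hint2 : Integrable fun t => t ^ 2 * Real.exp (-g t))
    (hmass : ∫ t, Real.exp (-g t) = 1)
    (hvar : (∫ t, t ^ 2 * Real.exp (-g t)) - (∫ t, t * Real.exp (-g t)) ^ 2 = 1) (x : ℝ) :
    ∫ t, (t - x) ^ 2 * Real.exp (-g t)
      = 1 + ((∫ t, t * Real.exp (-g t)) - x) ^ 2 := by
  have h : (fun t => (t - x) ^ 2 * Real.exp (-g t))
      = fun t => (t ^ 2 * Real.exp (-g t) - 2 * x * (t * Real.exp (-g t)))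
          + x ^ 2 * Real.exp (-g t) := by
    funext t; ring
  have hsubi : Integrable (fun t => t ^ 2 * Real.exp (-g t) - 2 * x * (t * Real.exp (-g t))) :=
    hint2.sub (hint1.const_mul (2 * x))
  rw [h, integral_add hsubi (hint.const_mul (x ^ 2)),
    integral_sub hint2 (hint1.const_mul (2 * x)),
    integral_const_mul, integral_const_mul, hmass]
  linear_combination hvar

lemma sup_bound (g : ℝ → ℝ) (hg : ConvexOn ℝ Set.univ g)
    (hint : Integrable fun t => Real.exp (-g t))
    (hint1 : Integrable fun t => t * Real.exp (-g t))
    (hint2 : Integrable fun t => t ^ 2 * Real.exp (-g t))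
    (hmass : ∫ t, Real.exp (-g t) = 1)
    (hvar : (∫ t, t ^ 2 * Real.exp (-g t)) - (∫ t, t * Real.exp (-g t)) ^ 2 = 1)
    (x : ℝ) : Real.exp (-g x) ≤ 20 := by
  have hf2x := integrable_shift g hint hint1 hint2 x
  have hval := integral_shift g hint hint1 hint2 hmass hvar x
  have hM : 0 < Real.exp (-g x) := Real.exp_pos _
  have hright := tail_right g hg hint hmass x hf2x
  -- reflection
  have hpres : MeasurePreserving (fun t : ℝ => 2 * x - t) volume volume :=
    Measure.measurePreserving_sub_left volume (2 * x)
  have hemb : MeasurableEmbedding (fun t : ℝ => 2 * x - t) := by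
    have hc : (fun t : ℝ => 2 * x - t) = (fun s : ℝ => -s) ∘ fun t : ℝ => t + -(2 * x) := by
      funext t; simp [Function.comp]; ring
    rw [hc]
    exact ((Homeomorph.neg ℝ).measurableEmbedding).comp
      ((Homeomorph.addRight (-(2 * x))).measurableEmbedding)
  have hg' : ConvexOn ℝ Set.univ fun t => g (2 * x - t) := by
    refine ⟨convex_univ, ?_⟩
    intro p _ q _ a b ha hb hab
    have h := hg.2 (Set.mem_univ (2 * x - p)) (Set.mem_univ (2 * x - q)) ha hb hab
    have heq : a • (2 * x - p) + b • (2 * x - q) = 2 * x - (a • p + b • q) := by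
      simp only [smul_eq_mul]
      linear_combination (2 * x) * hab
    rw [heq] at h
    simpa [smul_eq_mul] using h
  have hintg' : Integrable fun t => Real.exp (-g (2 * x - t)) :=
    (hpres.integrable_comp_emb hemb).mpr hint
  have hmassg' : ∫ t, Real.exp (-g (2 * x - t)) = 1 := by
    rw [hpres.integral_comp hemb (fun s => Real.exp (-g s))]
    exact hmass
  have hf2g' : Integrable fun t => (t - x) ^ 2 * Real.exp (-g (2 * x - t)) := by
    have hcomp := (hpres.integrable_comp_emb hemb
      (g := fun s => (s - x) ^ 2 * Real.exp (-g s))).mpr hf2x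
    have heq : (fun t => (t - x) ^ 2 * Real.exp (-g (2 * x - t)))
        = ((fun s => (s - x) ^ 2 * Real.exp (-g s)) ∘ fun t : ℝ => 2 * x - t) := by
      funext t; simp only [Function.comp]; ring_nf
    rw [heq]; exact hcomp
  have hleft0 := tail_right (fun t => g (2 * x - t)) hg' hintg' hmassg' x hf2g'
  beta_reduce at hleft0
  have hgx : (2 : ℝ) * x - x = x := by ring
  rw [hgx] at hleft0
  -- transfer left tail
  have htrans : ∫ s in Set.Iic x, (s - x) ^ 2 * Real.exp (-g s)
      = ∫ t in Set.Ioi x, (t - x) ^ 2 * Real.exp (-g (2 * x - t)) := by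
    have hpre : (fun t : ℝ => 2 * x - t) ⁻¹' (Set.Iic x) = Set.Ici x := by
      ext t
      simp only [Set.mem_preimage, Set.mem_Iic, Set.mem_Ici]
      constructor <;> intro h <;> linarith
    have h1 := hpres.setIntegral_preimage_emb hemb
      (fun s => (s - x) ^ 2 * Real.exp (-g s)) (Set.Iic x)
    rw [hpre] at h1
    rw [← h1, integral_Ici_eq_integral_Ioi]
    apply setIntegral_congr_fun measurableSet_Ioi
    intro t _
    ring_nf
  -- combine
  have hsplit : ∫ t, (t - x) ^ 2 * Real.exp (-g t)
      = (∫ t in Set.Iic x, (t - x) ^ 2 * Real.exp (-g t))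
        + ∫ t in Set.Ioi x, (t - x) ^ 2 * Real.exp (-g t) :=
    (intervalIntegral.integral_Iic_add_Ioi hf2x.integrableOn hf2x.integrableOn).symm
  have hone : 1 ≤ ∫ t, (t - x) ^ 2 * Real.exp (-g t) := by
    rw [hval]; nlinarith [sq_nonneg ((∫ t, t * Real.exp (-g t)) - x)]
  have htot : (1:ℝ) ≤ 364 / Real.exp (-g x) ^ 2 := by
    calc (1:ℝ) ≤ ∫ t, (t - x) ^ 2 * Real.exp (-g t) := hone
      _ = _ + _ := hsplit
      _ ≤ 182 / Real.exp (-g x) ^ 2 + 182 / Real.exp (-g x) ^ 2 := by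
          apply add_le_add
          · rw [htrans]; exact hleft0
          · exact hright
      _ = 364 / Real.exp (-g x) ^ 2 := by ring
  have hM2pos : 0 < Real.exp (-g x) ^ 2 := by positivity
  have h1 := mul_le_mul_of_nonneg_left htot hM2pos.le
  have h2 : Real.exp (-g x) ^ 2 * (364 / Real.exp (-g x) ^ 2) = 364 := by
    field_simp
  nlinarith [h1, h2, hM]

/-- Lemma `density lower bound bis`: a log-concave probability density
`f = e^{-g}` on `ℝ` with variance `1` and median `0` satisfies `f(t) ≥ 1/(4e⁴)` for all
`t ∈ [-1/(3e⁴), 1/(3e⁴)]`. -/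
theorem logconcave_density_lower_bound_near_median
    (g : ℝ → ℝ) (hg : ConvexOn ℝ Set.univ g)
    (hint : Integrable fun t => Real.exp (-g t))
    (hint1 : Integrable fun t => t * Real.exp (-g t))
    (hint2 : Integrable fun t => t ^ 2 * Real.exp (-g t))
    -- `e^{-g}` is a probability density
    (hmass : ∫ t, Real.exp (-g t) = 1)
    -- with variance 1
    (hvar : (∫ t, t ^ 2 * Real.exp (-g t)) - (∫ t, t * Real.exp (-g t)) ^ 2 = 1)
    -- and median 0
    (hmed : ∫ t in Set.Iio 0, Real.exp (-g t) = 1 / 2) :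
    ∀ t : ℝ, t ∈ Set.Icc (-(1 / (3 * Real.exp 4))) (1 / (3 * Real.exp 4)) →
      Real.exp (-g t) ≥ 1 / (4 * Real.exp 4) := by
  -- numeric facts
  have hE : (54:ℝ) < Real.exp 4 := by
    have h4 : Real.exp 4 = Real.exp 1 ^ (4:ℕ) := by
      rw [← Real.exp_nat_mul]; norm_num
    have h1 : (2.7182818283:ℝ) < Real.exp 1 := Real.exp_one_gt_d9
    have h2 : (7.389:ℝ) < Real.exp 1 ^ 2 := by nlinarith
    rw [h4]
    nlinarith [h2]
  have hEpos : (0:ℝ) < Real.exp 4 := Real.exp_pos _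
  set δ : ℝ := 1 / (3 * Real.exp 4) with hδdef
  set c : ℝ := 1 / (4 * Real.exp 4) with hcdef
  clear_value δ c
  have hδ0 : 0 < δ := by rw [hδdef]; positivity
  have hc0 : 0 < c := by rw [hcdef]; positivity
  have hδ3 : δ ≤ 3 := by
    rw [hδdef, div_le_iff₀ (by positivity)]
    nlinarith
  -- masses of halves
  have hIci : ∫ t in Set.Ici 0, Real.exp (-g t) = 1 / 2 := by
    have h := intervalIntegral.integral_Iio_add_Ici (b := (0:ℝ))
      hint.integrableOn hint.integrableOn
    rw [hmed, hmass] at h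
    linarith
  -- mean bounds
  set m : ℝ := ∫ t, t * Real.exp (-g t) with hmdef
  clear_value m
  have hm2 : ∫ t, t ^ 2 * Real.exp (-g t) = 1 + m ^ 2 := by
    linarith [hvar]
  have hsplitm : m = (∫ t in Set.Iio 0, t * Real.exp (-g t))
      + ∫ t in Set.Ici 0, t * Real.exp (-g t) := by
    rw [hmdef]
    exact (intervalIntegral.integral_Iio_add_Ici hint1.integrableOn hint1.integrableOn).symm
  have hIci2 : ∫ t in Set.Ici 0, t ^ 2 * Real.exp (-g t) ≤ 1 + m ^ 2 := by
    rw [← hm2]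
    exact setIntegral_le_integral hint2
      (Filter.Eventually.of_forall fun t => by positivity)
  have hIic2 : ∫ t in Set.Iio 0, t ^ 2 * Real.exp (-g t) ≤ 1 + m ^ 2 := by
    rw [← hm2]
    exact setIntegral_le_integral hint2
      (Filter.Eventually.of_forall fun t => by positivity)
  have hμle : m ≤ 1 := by
    by_contra hμ
    push_neg at hμ
    have hμ0 : 0 < m := by linarith
    have hneg : ∫ t in Set.Iio 0, t * Real.exp (-g t) ≤ 0 := by
      apply setIntegral_nonpos measurableSet_Iio
      intro t ht
      have ht0 : t ≤ 0 := le_of_lt ht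
      nlinarith [Real.exp_pos (-g t)]
    have hpt : ∀ t ∈ Set.Ici (0:ℝ), t * Real.exp (-g t)
        ≤ 1 / (4 * m) * (t ^ 2 * Real.exp (-g t)) + m * Real.exp (-g t) := by
      intro t _
      have he : 0 < Real.exp (-g t) := Real.exp_pos _
      have hsq : 0 ≤ (t - 2 * m) ^ 2 := sq_nonneg _
      have h1 : t ≤ t ^ 2 / (4 * m) + m := by
        rw [← sub_nonneg]
        have : t ^ 2 / (4 * m) + m - t = (t - 2 * m) ^ 2 / (4 * m) := by
          field_simp; ring
        rw [this]
        positivity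
      calc t * Real.exp (-g t) ≤ (t ^ 2 / (4 * m) + m) * Real.exp (-g t) :=
            mul_le_mul_of_nonneg_right h1 he.le
        _ = 1 / (4 * m) * (t ^ 2 * Real.exp (-g t)) + m * Real.exp (-g t) := by ring
    have hrint : IntegrableOn (fun t => 1 / (4 * m) * (t ^ 2 * Real.exp (-g t))
        + m * Real.exp (-g t)) (Set.Ici 0) :=
      ((hint2.const_mul (1 / (4 * m))).add (hint.const_mul m)).integrableOn
    have hb : ∫ t in Set.Ici 0, t * Real.exp (-g t)
        ≤ ∫ t in Set.Ici 0, (1 / (4 * m) * (t ^ 2 * Real.exp (-g t)) + m * Real.exp (-g t)) :=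
      setIntegral_mono_on hint1.integrableOn hrint measurableSet_Ici hpt
    have hb2 : ∫ t in Set.Ici 0, (1 / (4 * m) * (t ^ 2 * Real.exp (-g t)) + m * Real.exp (-g t))
        = 1 / (4 * m) * (∫ t in Set.Ici 0, t ^ 2 * Real.exp (-g t))
          + m * ∫ t in Set.Ici 0, Real.exp (-g t) := by
      rw [integral_add ((hint2.const_mul (1 / (4 * m))).integrableOn)
        ((hint.const_mul m).integrableOn), integral_const_mul, integral_const_mul]
    rw [hb2, hIci] at hb
    have hq : 1 / (4 * m) * (∫ t in Set.Ici 0, t ^ 2 * Real.exp (-g t))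
        ≤ 1 / (4 * m) * (1 + m ^ 2) :=
      mul_le_mul_of_nonneg_left hIci2 (by positivity)
    have hfin : m ≤ 1 / (4 * m) * (1 + m ^ 2) + m * (1 / 2) := by
      calc m = _ + _ := hsplitm
        _ ≤ 0 + (1 / (4 * m) * (1 + m ^ 2) + m * (1 / 2)) := by
            apply add_le_add hneg
            linarith [hb, hq]
        _ = 1 / (4 * m) * (1 + m ^ 2) + m * (1 / 2) := by ring
    have h4m : 0 < 4 * m := by linarith
    have hm0 : m ≠ 0 := by linarith
    have hdiv : 1 / (4 * m) * (1 + m ^ 2) * (4 * m) = 1 + m ^ 2 := by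
      field_simp
    nlinarith [hfin, hdiv, hμ, h4m]
  have hμge : -1 ≤ m := by
    by_contra hμ
    push_neg at hμ
    have hμ0 : 0 < -m := by linarith
    have hpos : 0 ≤ ∫ t in Set.Ici 0, t * Real.exp (-g t) := by
      apply setIntegral_nonneg measurableSet_Ici
      intro t ht
      have ht0 : 0 ≤ t := ht
      positivity
    have hpt : ∀ t ∈ Set.Iio (0:ℝ),
        -(1 / (4 * -m) * (t ^ 2 * Real.exp (-g t)) + (-m) * Real.exp (-g t))
          ≤ t * Real.exp (-g t) := by
      intro t _
      have he : 0 < Real.exp (-g t) := Real.exp_pos _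
      have hm0 : m ≠ 0 := by linarith
      have h1 : -(t ^ 2 / (4 * -m) + -m) ≤ t := by
        rw [← sub_nonneg]
        have heq : t - -(t ^ 2 / (4 * -m) + -m) = (t + 2 * -m) ^ 2 / (4 * -m) := by
          field_simp [hm0]
          ring
        rw [heq]
        positivity
      calc -(1 / (4 * -m) * (t ^ 2 * Real.exp (-g t)) + (-m) * Real.exp (-g t))
          = -(t ^ 2 / (4 * -m) + -m) * Real.exp (-g t) := by ring
        _ ≤ t * Real.exp (-g t) := mul_le_mul_of_nonneg_right h1 he.le
    have hrint : IntegrableOn (fun t => -(1 / (4 * -m) * (t ^ 2 * Real.exp (-g t))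
        + (-m) * Real.exp (-g t))) (Set.Iio 0) :=
      (((hint2.const_mul (1 / (4 * -m))).add (hint.const_mul (-m))).neg).integrableOn
    have hb : ∫ t in Set.Iio 0, -(1 / (4 * -m) * (t ^ 2 * Real.exp (-g t))
          + (-m) * Real.exp (-g t))
        ≤ ∫ t in Set.Iio 0, t * Real.exp (-g t) :=
      setIntegral_mono_on hrint hint1.integrableOn measurableSet_Iio hpt
    have hb2 : ∫ t in Set.Iio 0, -(1 / (4 * -m) * (t ^ 2 * Real.exp (-g t))
          + (-m) * Real.exp (-g t))
        = -(1 / (4 * -m) * (∫ t in Set.Iio 0, t ^ 2 * Real.exp (-g t))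
          + (-m) * ∫ t in Set.Iio 0, Real.exp (-g t)) := by
      rw [integral_neg, integral_add ((hint2.const_mul (1 / (4 * -m))).integrableOn)
        ((hint.const_mul (-m)).integrableOn), integral_const_mul, integral_const_mul]
    rw [hb2, hmed] at hb
    have hq : 1 / (4 * -m) * (∫ t in Set.Iio 0, t ^ 2 * Real.exp (-g t))
        ≤ 1 / (4 * -m) * (1 + m ^ 2) :=
      mul_le_mul_of_nonneg_left hIic2 (by positivity)
    have hfin : -(1 / (4 * -m) * (1 + m ^ 2) + (-m) * (1 / 2)) ≤ m := by
      have h1 : -(1 / (4 * -m) * (1 + m ^ 2) + (-m) * (1 / 2))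
          ≤ -(1 / (4 * -m) * (∫ t in Set.Iio 0, t ^ 2 * Real.exp (-g t)) + (-m) * (1 / 2)) := by
        apply neg_le_neg
        linarith [hq]
      calc -(1 / (4 * -m) * (1 + m ^ 2) + (-m) * (1 / 2)) ≤ _ := h1
        _ ≤ ∫ t in Set.Iio 0, t * Real.exp (-g t) := hb
        _ ≤ (∫ t in Set.Iio 0, t * Real.exp (-g t)) + ∫ t in Set.Ici 0, t * Real.exp (-g t) := by
            linarith [hpos]
        _ = m := hsplitm.symm
    have h4m : 0 < 4 * -m := by linarith
    have hm0 : m ≠ 0 := by linarith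
    have hdiv : 1 / (4 * -m) * (1 + m ^ 2) * (4 * -m) = 1 + m ^ 2 := by
      field_simp
    have hq2 : -m / 2 ≤ 1 / (4 * -m) * (1 + m ^ 2) := by linarith [hfin]
    have hq3 := mul_le_mul_of_nonneg_right hq2 h4m.le
    rw [hdiv] at hq3
    nlinarith [hμ, hq3]
  have hm2le : m ^ 2 ≤ 1 := by
    nlinarith [mul_nonneg (by linarith : (0:ℝ) ≤ 1 - m) (by linarith : (0:ℝ) ≤ 1 + m)]
  -- Chebyshev tails
  have hcheb_r : ∫ t in Set.Ioi (3:ℝ), Real.exp (-g t) ≤ 2 / 9 := by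
    have h1 : ∫ t in Set.Ioi (3:ℝ), Real.exp (-g t)
        ≤ ∫ t in Set.Ioi (3:ℝ), 1 / 9 * (t ^ 2 * Real.exp (-g t)) := by
      apply setIntegral_mono_on hint.integrableOn
        ((hint2.const_mul (1 / 9)).integrableOn) measurableSet_Ioi
      intro t ht
      have ht3 : (3:ℝ) < t := ht
      have he : 0 < Real.exp (-g t) := Real.exp_pos _
      have h9 : (1:ℝ) ≤ t ^ 2 / 9 := by nlinarith
      have hmul := mul_le_mul_of_nonneg_right h9 he.le
      have heq : t ^ 2 / 9 * Real.exp (-g t) = 1 / 9 * (t ^ 2 * Real.exp (-g t)) := by ring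
      linarith [hmul, heq.le, heq.ge]
    have h2 : ∫ t in Set.Ioi (3:ℝ), 1 / 9 * (t ^ 2 * Real.exp (-g t))
        ≤ ∫ t, 1 / 9 * (t ^ 2 * Real.exp (-g t)) := by
      apply setIntegral_le_integral (hint2.const_mul (1 / 9))
        (Filter.Eventually.of_forall fun t => by positivity)
    rw [integral_const_mul, integral_const_mul, hm2] at h2
    rw [integral_const_mul] at h1
    linarith [hm2le, h1, h2]
  have hcheb_l : ∫ t in Set.Iic (-3:ℝ), Real.exp (-g t) ≤ 2 / 9 := by
    have h1 : ∫ t in Set.Iic (-3:ℝ), Real.exp (-g t)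
        ≤ ∫ t in Set.Iic (-3:ℝ), 1 / 9 * (t ^ 2 * Real.exp (-g t)) := by
      apply setIntegral_mono_on hint.integrableOn
        ((hint2.const_mul (1 / 9)).integrableOn) measurableSet_Iic
      intro t ht
      have ht3 : t ≤ (-3:ℝ) := ht
      have he : 0 < Real.exp (-g t) := Real.exp_pos _
      have h9 : (1:ℝ) ≤ t ^ 2 / 9 := by nlinarith
      have hmul := mul_le_mul_of_nonneg_right h9 he.le
      have heq : t ^ 2 / 9 * Real.exp (-g t) = 1 / 9 * (t ^ 2 * Real.exp (-g t)) := by ring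
      linarith [hmul, heq.le, heq.ge]
    have h2 : ∫ t in Set.Iic (-3:ℝ), 1 / 9 * (t ^ 2 * Real.exp (-g t))
        ≤ ∫ t, 1 / 9 * (t ^ 2 * Real.exp (-g t)) := by
      apply setIntegral_le_integral (hint2.const_mul (1 / 9))
        (Filter.Eventually.of_forall fun t => by positivity)
    rw [integral_const_mul, integral_const_mul, hm2] at h2
    rw [integral_const_mul] at h1
    linarith [hm2le, h1, h2]
  -- sup bound
  have hvar' : (∫ t, t ^ 2 * Real.exp (-g t)) - (∫ t, t * Real.exp (-g t)) ^ 2 = 1 := by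
    rw [← hmdef]; exact hvar
  have hsup : ∀ x, Real.exp (-g x) ≤ 20 := sup_bound g hg hint hint1 hint2 hmass hvar'
  -- small-interval masses
  have hmass_r0 : ∫ t in Set.Ico 0 δ, Real.exp (-g t) ≤ 20 * δ := by
    have h1 : ∫ t in Set.Ico 0 δ, Real.exp (-g t) ≤ ∫ t in Set.Ico 0 δ, (20:ℝ) :=
      setIntegral_mono_on hint.integrableOn (integrable_const _) measurableSet_Ico
        fun t _ => hsup t
    rw [setIntegral_const, measureReal_def, Real.volume_Ico, smul_eq_mul,
      ENNReal.toReal_ofReal (by linarith)] at h1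
    linarith
  have hmass_l0 : ∫ t in Set.Ioo (-δ) 0, Real.exp (-g t) ≤ 20 * δ := by
    have h1 : ∫ t in Set.Ioo (-δ) 0, Real.exp (-g t) ≤ ∫ t in Set.Ioo (-δ) 0, (20:ℝ) :=
      setIntegral_mono_on hint.integrableOn (integrable_const _) measurableSet_Ioo
        fun t _ => hsup t
    rw [setIntegral_const, measureReal_def, Real.volume_Ioo, smul_eq_mul] at h1
    have : (0:ℝ) - -δ = δ := by ring
    rw [this, ENNReal.toReal_ofReal (by linarith)] at h1
    linarith
  -- decomposition right
  have hdec_r : ∫ t in Set.Ici (0:ℝ), Real.exp (-g t)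
      = (∫ t in Set.Ico 0 δ, Real.exp (-g t)) + ((∫ t in Set.Icc δ 3, Real.exp (-g t))
        + ∫ t in Set.Ioi (3:ℝ), Real.exp (-g t)) := by
    rw [← setIntegral_union ((Iic_disjoint_Ioi le_rfl).mono_left Icc_subset_Iic_self)
      measurableSet_Ioi hint.integrableOn hint.integrableOn,
      Set.Icc_union_Ioi_eq_Ici hδ3,
      ← setIntegral_union ((Iio_disjoint_Ici le_rfl).mono_left Ico_subset_Iio_self)
      measurableSet_Ici hint.integrableOn hint.integrableOn,
      Set.Ico_union_Ici_eq_Ici hδ0.le]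
  have hmid_r : 1 / 2 - 20 * δ - 2 / 9 ≤ ∫ t in Set.Icc δ 3, Real.exp (-g t) := by
    rw [hIci] at hdec_r
    linarith [hmass_r0, hcheb_r]
  -- decomposition left
  have hdec_l : ∫ t in Set.Iio (0:ℝ), Real.exp (-g t)
      = ((∫ t in Set.Iic (-3:ℝ), Real.exp (-g t)) + (∫ t in Set.Ioc (-3:ℝ) (-δ), Real.exp (-g t)))
        + ∫ t in Set.Ioo (-δ) 0, Real.exp (-g t) := by
    rw [← setIntegral_union (Iic_disjoint_Ioc le_rfl) measurableSet_Ioc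
      hint.integrableOn hint.integrableOn,
      Set.Iic_union_Ioc_eq_Iic (by linarith : (-3:ℝ) ≤ -δ),
      ← setIntegral_union ((Iic_disjoint_Ioi le_rfl).mono_right Ioo_subset_Ioi_self)
      measurableSet_Ioo hint.integrableOn hint.integrableOn,
      Set.Iic_union_Ioo_eq_Iio (by linarith : -δ < 0)]
  have hmid_l : 1 / 2 - 20 * δ - 2 / 9 ≤ ∫ t in Set.Ioc (-3:ℝ) (-δ), Real.exp (-g t) := by
    rw [hmed] at hdec_l
    linarith [hmass_l0, hcheb_l]
  -- numeric: 1/2 - 20δ - 2/9 > 3c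
  have hnum : 3 * c < 1 / 2 - 20 * δ - 2 / 9 := by
    rw [hcdef, hδdef]
    have hE0 : (0:ℝ) < Real.exp 4 := hEpos
    rw [← sub_pos]
    have heq : 1 / 2 - 20 * (1 / (3 * Real.exp 4)) - 2 / 9 - 3 * (1 / (4 * Real.exp 4))
        = (10 * Real.exp 4 - 267) / (36 * Real.exp 4) := by
      field_simp
      ring
    rw [heq]
    apply div_pos (by linarith) (by linarith)
  -- existence of good points on the right and left
  have hexists_a : ∃ a ∈ Set.Icc δ 3, c ≤ Real.exp (-g a) := by
    by_contra hcon
    push_neg at hcon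
    have h1 : ∫ t in Set.Icc δ 3, Real.exp (-g t) ≤ ∫ t in Set.Icc δ 3, c :=
      setIntegral_mono_on hint.integrableOn (integrable_const _) measurableSet_Icc
        fun t ht => (hcon t ht).le
    rw [setIntegral_const, measureReal_def, Real.volume_Icc, smul_eq_mul,
      ENNReal.toReal_ofReal (by linarith)] at h1
    have h2 : (3 - δ) * c ≤ 3 * c := by nlinarith
    linarith [hmid_r, h1, h2, hnum]
  have hexists_b : ∃ b ∈ Set.Ioc (-3:ℝ) (-δ), c ≤ Real.exp (-g b) := by
    by_contra hcon
    push_neg at hcon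
    have h1 : ∫ t in Set.Ioc (-3:ℝ) (-δ), Real.exp (-g t) ≤ ∫ t in Set.Ioc (-3:ℝ) (-δ), c :=
      setIntegral_mono_on hint.integrableOn (integrable_const _) measurableSet_Ioc
        fun t ht => (hcon t ht).le
    rw [setIntegral_const, measureReal_def, Real.volume_Ioc, smul_eq_mul] at h1
    have heq : -δ - -3 = 3 - δ := by ring
    rw [heq, ENNReal.toReal_ofReal (by linarith)] at h1
    have h2 : (3 - δ) * c ≤ 3 * c := by nlinarith
    linarith [hmid_l, h1, h2, hnum]
  obtain ⟨a, ha_mem, ha⟩ := hexists_a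
  obtain ⟨b, hb_mem, hb⟩ := hexists_b
  -- conclusion
  intro t ht
  obtain ⟨ht1, ht2⟩ := ht
  have hba : b ≤ a := by
    have := hb_mem.2
    have := ha_mem.1
    linarith
  have htseg : t ∈ segment ℝ b a := by
    rw [segment_eq_Icc hba]
    constructor
    · linarith [hb_mem.2]
    · linarith [ha_mem.1]
  have hmax := hg.le_on_segment (Set.mem_univ b) (Set.mem_univ a) htseg
  rcases max_cases (g b) (g a) with ⟨hm, _⟩ | ⟨hm, _⟩
  · rw [hm] at hmax
    have : Real.exp (-g b) ≤ Real.exp (-g t) := Real.exp_le_exp.mpr (by linarith)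
    rw [ge_iff_le]
    linarith [hb, this]
  · rw [hm] at hmax
    have : Real.exp (-g a) ≤ Real.exp (-g t) := Real.exp_le_exp.mpr (by linarith)
    rw [ge_iff_le]
    linarith [ha, this]


end
end

section
/- Let f(t) = e^{−g(t)} be a log-concave probability density on ℝ (g : ℝ → ℝ convex) whose associated distribution has variance 1. Then sup_{t ∈ ℝ} f(t) ≤ e^{7.1}. -/
open MeasureTheory Real Set

noncomputable section


lemma exists_small_aux (g : ℝ → ℝ)
    (hint : Integrable fun t => Real.exp (-g t))
    (hmass : ∫ t, Real.exp (-g t) = 1)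
    (s : Set ℝ) (hs : MeasurableSet s)
    (hμs : volume s = ENNReal.ofReal (1/10)) :
    ∃ b ∈ s, Real.exp (-g b) ≤ 10 := by
  by_contra h
  push_neg at h
  have hμs' : volume s ≠ ⊤ := by rw [hμs]; exact ENNReal.ofReal_ne_top
  have h1 : (10:ℝ) * (volume s).toReal ≤ ∫ t in s, Real.exp (-g t) :=
    setIntegral_ge_of_const_le_real hs hμs' (fun x hx => (h x hx).le) hint.integrableOn
  have htr : (volume s).toReal = 1/10 := by
    rw [hμs, ENNReal.toReal_ofReal]; norm_num
  have h2 : 0 < ∫ t in sᶜ, Real.exp (-g t) := by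
    rw [setIntegral_pos_iff_support_of_nonneg_ae
      (Filter.Eventually.of_forall fun x => (Real.exp_pos _).le) hint.integrableOn]
    have hsupp : Function.support (fun t => Real.exp (-g t)) ∩ sᶜ = sᶜ := by
      ext x; simp [Function.mem_support, (Real.exp_pos _).ne']
    rw [hsupp, pos_iff_ne_zero]
    intro h0
    have := measure_union_le (μ := volume) s sᶜ
    rw [Set.union_compl_self, Real.volume_univ, hμs, h0, add_zero] at this
    exact (lt_of_le_of_lt this ENNReal.ofReal_lt_top).ne rfl
  have h3 := integral_add_compl hs hint
  rw [hmass] at h3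
  rw [htr] at h1
  linarith

lemma log_ten_le : Real.log 10 ≤ 3.1 := by
  rw [Real.log_le_iff_le_exp (by norm_num)]
  have h1 : (2.7182818283:ℝ) < Real.exp 1 := Real.exp_one_gt_d9
  have h3 : Real.exp 1 ^ (3:ℕ) ≤ Real.exp 3.1 := by
    rw [← Real.exp_nat_mul]
    apply Real.exp_le_exp.2; norm_num
  have h2 : (2.7182818283:ℝ)^(3:ℕ) < Real.exp 1 ^ (3:ℕ) :=
    pow_lt_pow_left₀ h1 (by norm_num) (by norm_num)
  nlinarith [h2, h3]

lemma tail_int_right (b : ℝ) :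
    ∫ t in Ioi b, Real.exp (-(38*t)) = 38⁻¹ * Real.exp (-(38*b)) := by
  have := integral_comp_mul_left_Ioi (fun x => Real.exp (-x)) b (by norm_num : (0:ℝ) < 38)
  simpa [integral_exp_neg_Ioi, integral_exp_Iic, smul_eq_mul] using this

lemma exp_int_right (b : ℝ) :
    IntegrableOn (fun t : ℝ => Real.exp (-(38*t))) (Ioi b) := by
  simpa [neg_mul] using exp_neg_integrableOn_Ioi b (by norm_num : (0:ℝ) < 38)

lemma tail_int_left (a : ℝ) :
    ∫ t in Iic a, Real.exp (38*t) = 38⁻¹ * Real.exp (38*a) := by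
  have := integral_comp_neg_Iic a (fun y => Real.exp (-(38*y)))
  simp only [mul_neg, neg_neg] at this
  rw [this, tail_int_right]
  simp [mul_neg, neg_neg]

lemma exp_int_left (a : ℝ) :
    IntegrableOn (fun t : ℝ => Real.exp (38*t)) (Iic a) := by
  have m : MeasurableEmbedding (fun x : ℝ => -x) :=
    (Homeomorph.neg ℝ).measurableEmbedding
  have h : IntegrableOn (fun x : ℝ => Real.exp (-(38*x))) (Ici (-a)) := by
    rw [integrableOn_Ici_iff_integrableOn_Ioi]
    exact exp_int_right (-a)
  rw [← Measure.map_neg_eq_self (volume : Measure ℝ), m.integrableOn_map_iff]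
  simpa [Function.comp_def, mul_neg, neg_neg, Set.neg_preimage, Set.neg_Iic] using h


/-- Lemma `density upper bound`: a log-concave probability density
`f = e^{-g}` on `ℝ` with variance `1` satisfies `sup_t f(t) ≤ e^{7.1}`. -/
theorem logconcave_density_upper_bound
    (g : ℝ → ℝ) (hg : ConvexOn ℝ Set.univ g)
    (hint : Integrable fun t => Real.exp (-g t))
    (hint1 : Integrable fun t => t * Real.exp (-g t))
    (hint2 : Integrable fun t => t ^ 2 * Real.exp (-g t))
    -- `e^{-g}` is a probability density
    (hmass : ∫ t, Real.exp (-g t) = 1)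
    -- with variance 1
    (hvar : (∫ t, t ^ 2 * Real.exp (-g t)) - (∫ t, t * Real.exp (-g t)) ^ 2 = 1) :
    ∀ t : ℝ, Real.exp (-g t) ≤ Real.exp 7.1 := by
  intro t₀
  by_contra hM
  push_neg at hM
  have hgt0 : g t₀ < -7.1 := by
    have := Real.exp_lt_exp.mp hM; linarith
  obtain ⟨b, hbmem, hfb⟩ := exists_small_aux g hint hmass (Ioc t₀ (t₀+1/10)) measurableSet_Ioc
    (by rw [Real.volume_Ioc]; norm_num)
  obtain ⟨a, hamem, hfa⟩ := exists_small_aux g hint hmass (Ico (t₀-1/10) t₀) measurableSet_Ico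
    (by rw [Real.volume_Ico]; norm_num)
  obtain ⟨hb1, hb2⟩ := hbmem
  obtain ⟨ha1, ha2⟩ := hamem
  have hlog := log_ten_le
  have hga : -Real.log 10 ≤ g a := by
    have : -g a ≤ Real.log 10 := by
      rw [← Real.exp_le_exp, Real.exp_log (by norm_num : (0:ℝ) < 10)]; exact hfa
    linarith
  have hgb : -Real.log 10 ≤ g b := by
    have : -g b ≤ Real.log 10 := by
      rw [← Real.exp_le_exp, Real.exp_log (by norm_num : (0:ℝ) < 10)]; exact hfb
    linarith
  have hab : a ≤ b := le_of_lt (ha2.trans hb1)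
  -- slope estimates
  have hsr : ∀ t, b < t → 40 * (t - b) ≤ g t - g b := by
    intro t ht
    have hs := hg.slope_mono_adjacent (Set.mem_univ t₀) (Set.mem_univ t) hb1 ht
    have hbt0 : (0:ℝ) < b - t₀ := by linarith
    have h40 : (40:ℝ) ≤ (g b - g t₀)/(b - t₀) := by
      rw [le_div_iff₀ hbt0]; nlinarith
    have h := h40.trans hs
    rw [le_div_iff₀ (by linarith : (0:ℝ) < t - b)] at h
    linarith
  have hsl : ∀ t, t < a → 40 * (a - t) ≤ g t - g a := by
    intro t ht
    have hs := hg.slope_mono_adjacent (Set.mem_univ t) (Set.mem_univ t₀) ht ha2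
    have hat0 : (0:ℝ) < t₀ - a := by linarith
    have hr : (g t₀ - g a)/(t₀ - a) ≤ -40 := by
      rw [div_le_iff₀ hat0]; nlinarith
    have h := hs.trans hr
    rw [div_le_iff₀ (by linarith : (0:ℝ) < a - t)] at h
    linarith
  -- the second-moment function about t₀
  set I1 := ∫ t, t * Real.exp (-g t) with hI1
  have hrw : (fun t => (t - t₀)^2 * Real.exp (-g t))
      = fun t => t^2*Real.exp (-g t) - (2*t₀)*(t*Real.exp (-g t)) + t₀^2 * Real.exp (-g t) := by
    funext t; ring
  have hφint : Integrable (fun t => (t - t₀)^2 * Real.exp (-g t)) := by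
    rw [hrw]; exact (hint2.sub (hint1.const_mul _)).add (hint.const_mul _)
  have hφval : ∫ t, (t - t₀)^2 * Real.exp (-g t) = 1 + (I1 - t₀)^2 := by
    have hA : Integrable (fun t => t^2*Real.exp (-g t) - (2*t₀)*(t*Real.exp (-g t))) :=
      hint2.sub (hint1.const_mul _)
    have hB : Integrable (fun t => t₀^2 * Real.exp (-g t)) := hint.const_mul _
    have hC : Integrable (fun t => (2*t₀)*(t*Real.exp (-g t))) := hint1.const_mul _
    rw [hrw, integral_add hA hB, integral_sub hint2 hC, integral_const_mul, integral_const_mul, hmass]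
    have h2 : ∫ t, t^2*Real.exp (-g t) = 1 + I1^2 := by rw [hI1] at *; linarith [hvar]
    rw [h2]; ring
  -- right tail bound
  have hmajr : ∀ t ∈ Ioi b, (t - t₀)^2 * Real.exp (-g t)
      ≤ (10 * Real.exp (38*b)) * Real.exp (-(38*t)) := by
    intro t ht
    have ht' : b < t := ht
    have e1 : Real.exp (-g t) ≤ 10 * Real.exp (40*b - 40*t) := by
      have h40 := hsr t ht'
      have hsplit : Real.exp (-g t) = Real.exp (-g b) * Real.exp (g b - g t) := by
        rw [← Real.exp_add]; ring_nf
      rw [hsplit]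
      exact mul_le_mul hfb (Real.exp_le_exp.2 (by linarith)) (Real.exp_pos _).le (by norm_num)
    have e2 : (t - t₀)^2 ≤ Real.exp (2*t - 2*b) := by
      have h0 : (0:ℝ) ≤ t - t₀ := by linarith
      have h1 : t - t₀ ≤ Real.exp (t - b) := by
        have := Real.add_one_le_exp (t - b); linarith
      calc (t - t₀)^2 ≤ (Real.exp (t - b))^2 := pow_le_pow_left₀ h0 h1 2
        _ = Real.exp (2*t - 2*b) := by rw [sq, ← Real.exp_add]; congr 1; ring
    calc (t - t₀)^2 * Real.exp (-g t)
        ≤ Real.exp (2*t - 2*b) * (10 * Real.exp (40*b - 40*t)) :=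
          mul_le_mul e2 e1 (Real.exp_pos _).le (Real.exp_pos _).le
      _ = (10 * Real.exp (38*b)) * Real.exp (-(38*t)) := by
          rw [show Real.exp (2*t - 2*b) * (10 * Real.exp (40*b - 40*t))
              = 10 * (Real.exp (2*t - 2*b) * Real.exp (40*b - 40*t)) by ring,
            ← Real.exp_add, show (2*t - 2*b) + (40*b - 40*t) = 38*b + -(38*t) by ring,
            Real.exp_add]
          ring
  have hIR : ∫ t in Ioi b, (t - t₀)^2 * Real.exp (-g t) ≤ 10/38 := by
    have hmInt : IntegrableOn (fun t : ℝ => (10 * Real.exp (38*b)) * Real.exp (-(38*t))) (Ioi b) :=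
      (exp_int_right b).const_mul _
    have h := setIntegral_mono_on hφint.integrableOn hmInt measurableSet_Ioi hmajr
    rw [integral_const_mul, tail_int_right] at h
    have hexp : Real.exp (38*b) * Real.exp (-(38*b)) = 1 := by rw [← Real.exp_add]; simp
    calc ∫ t in Ioi b, (t - t₀)^2 * Real.exp (-g t)
        ≤ 10 * Real.exp (38*b) * (38⁻¹ * Real.exp (-(38*b))) := h
      _ = 10 * 38⁻¹ * (Real.exp (38*b) * Real.exp (-(38*b))) := by ring
      _ = 10/38 := by rw [hexp]; norm_num
  -- left tail bound
  have hmajl : ∀ t ∈ Iic a, (t - t₀)^2 * Real.exp (-g t)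
      ≤ (10 * Real.exp (-(38*a))) * Real.exp (38*t) := by
    intro t ht
    have ht' : t ≤ a := ht
    have e1 : Real.exp (-g t) ≤ 10 * Real.exp (40*t - 40*a) := by
      rcases eq_or_lt_of_le ht' with rfl | hlt
      · simpa using hfa
      · have h40 := hsl t hlt
        have hsplit : Real.exp (-g t) = Real.exp (-g a) * Real.exp (g a - g t) := by
          rw [← Real.exp_add]; ring_nf
        rw [hsplit]
        exact mul_le_mul hfa (Real.exp_le_exp.2 (by linarith)) (Real.exp_pos _).le (by norm_num)
    have e2 : (t - t₀)^2 ≤ Real.exp (2*a - 2*t) := by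
      have h0 : (0:ℝ) ≤ t₀ - t := by linarith
      have h1 : t₀ - t ≤ Real.exp (a - t) := by
        have := Real.add_one_le_exp (a - t); linarith
      calc (t - t₀)^2 = (t₀ - t)^2 := by ring
        _ ≤ (Real.exp (a - t))^2 := pow_le_pow_left₀ h0 h1 2
        _ = Real.exp (2*a - 2*t) := by rw [sq, ← Real.exp_add]; congr 1; ring
    calc (t - t₀)^2 * Real.exp (-g t)
        ≤ Real.exp (2*a - 2*t) * (10 * Real.exp (40*t - 40*a)) :=
          mul_le_mul e2 e1 (Real.exp_pos _).le (Real.exp_pos _).le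
      _ = (10 * Real.exp (-(38*a))) * Real.exp (38*t) := by
          rw [show Real.exp (2*a - 2*t) * (10 * Real.exp (40*t - 40*a))
              = 10 * (Real.exp (2*a - 2*t) * Real.exp (40*t - 40*a)) by ring,
            ← Real.exp_add, show (2*a - 2*t) + (40*t - 40*a) = -(38*a) + 38*t by ring,
            Real.exp_add]
          ring
  have hIL : ∫ t in Iic a, (t - t₀)^2 * Real.exp (-g t) ≤ 10/38 := by
    have hmInt : IntegrableOn (fun t : ℝ => (10 * Real.exp (-(38*a))) * Real.exp (38*t)) (Iic a) :=
      (exp_int_left a).const_mul _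
    have h := setIntegral_mono_on hφint.integrableOn hmInt measurableSet_Iic hmajl
    rw [integral_const_mul, tail_int_left] at h
    have hexp : Real.exp (-(38*a)) * Real.exp (38*a) = 1 := by rw [← Real.exp_add]; simp
    calc ∫ t in Iic a, (t - t₀)^2 * Real.exp (-g t)
        ≤ 10 * Real.exp (-(38*a)) * (38⁻¹ * Real.exp (38*a)) := h
      _ = 10 * 38⁻¹ * (Real.exp (-(38*a)) * Real.exp (38*a)) := by ring
      _ = 10/38 := by rw [hexp]; norm_num
  -- middle bound
  have hIM : ∫ t in Ioc a b, (t - t₀)^2 * Real.exp (-g t) ≤ 1/100 := by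
    have hmono : ∀ t ∈ Ioc a b, (t - t₀)^2 * Real.exp (-g t) ≤ (1/100) * Real.exp (-g t) := by
      intro t ht
      have h1 : (t - t₀)^2 ≤ 1/100 := by
        have := ht.1; have := ht.2; nlinarith
      exact mul_le_mul_of_nonneg_right h1 (Real.exp_pos _).le
    have h2 := setIntegral_mono_on hφint.integrableOn
      (hint.const_mul (1/100)).integrableOn measurableSet_Ioc hmono
    have h4 : ∫ t in Ioc a b, Real.exp (-g t) ≤ 1 := by
      rw [← hmass]
      exact setIntegral_le_integral hint (Filter.Eventually.of_forall fun x => (Real.exp_pos _).le)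
    rw [integral_const_mul] at h2
    linarith
  -- splitting
  have hsplit1 : ∫ t, (t - t₀)^2 * Real.exp (-g t)
      = (∫ t in Iic b, (t - t₀)^2 * Real.exp (-g t)) + ∫ t in Ioi b, (t - t₀)^2 * Real.exp (-g t) := by
    rw [← integral_add_compl measurableSet_Iic hφint, Set.compl_Iic]
  have hsplit2 : ∫ t in Iic b, (t - t₀)^2 * Real.exp (-g t)
      = (∫ t in Iic a, (t - t₀)^2 * Real.exp (-g t)) + ∫ t in Ioc a b, (t - t₀)^2 * Real.exp (-g t) := by
    rw [← Set.Iic_union_Ioc_eq_Iic hab,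
      setIntegral_union (Set.Iic_disjoint_Ioc le_rfl) measurableSet_Ioc
        hφint.integrableOn hφint.integrableOn]
  nlinarith [sq_nonneg (I1 - t₀), hφval, hsplit1, hsplit2, hIR, hIL, hIM]


end
end
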